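/- arXiv:2305.05826 — 2 statements merged into one kernel-verified Lean document; each statement's English description precedes it below -/
import Mathlib

section
/- Let A ∈ ℝ^{n×n} with singular values σ₁(A) ≥ … ≥ σₙ(A), let ε ∈ (0,1), and let k ≤ n. Suppose unit vectors z₁,…,z_k ∈ ℝⁿ are such that, defining A⁽¹⁾ = A and A⁽ⁱ⁺¹⁾ = A⁽ⁱ⁾ − zᵢzᵢᵀA for 1 ≤ i ≤ k, each zᵢ lies in the column space of A⁽ⁱ⁾ and satisfies ‖(A⁽ⁱ⁾)ᵀzᵢ‖₂ ≥ (1 − ε)·σ₁(A⁽ⁱ⁾). Then z₁,…,z_k are pairwise orthogonal unit vectors, and for every i ∈ {1,…,k}: (1 − ε)·σᵢ(A) ≤ ‖Aᵀzᵢ‖₂ ≤ σᵢ(A) + σ₁(A)·√(2iε). -/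
open Matrix BigOperators Finset


/-- The spectral (operator) norm of a real square matrix. -/
noncomputable def specNorm {m : ℕ} (M : Matrix (Fin m) (Fin m) ℝ) : ℝ :=
  ‖LinearMap.toContinuousLinearMap (Matrix.toEuclideanLin M)‖

/-- The `n × n` all-ones matrix. -/
def allOnes (m : ℕ) : Matrix (Fin m) (Fin m) ℝ := Matrix.of fun _ _ => 1

/-- Euclidean norm of a vector in `ℝⁿ`. -/
noncomputable def vnorm {m : ℕ} (x : Fin m → ℝ) : ℝ := Real.sqrt (∑ i, (x i) ^ 2)

/-- The (unsorted) singular values of a real square matrix: square roots of the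
eigenvalues of `Aᵀ A`. -/
noncomputable def svRaw {m : ℕ} (A : Matrix (Fin m) (Fin m) ℝ) : Fin m → ℝ :=
  fun j => Real.sqrt ((Matrix.isHermitian_iff_isSymm.mpr (Matrix.isSymm_transpose_mul_self A)).eigenvalues j)

/-- `sval A i` is the `i`-th largest singular value of `A` (1-based indexing);
it is `0` for `i = 0` and for `i > m`. -/
noncomputable def sval {m : ℕ} (A : Matrix (Fin m) (Fin m) ℝ) (i : ℕ) : ℝ :=
  if h : 1 ≤ i ∧ i ≤ m then (svRaw A ∘ Tuple.sort (svRaw A)) ⟨m - i, by omega⟩ else 0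

/-- The nuclear (Schatten-1) norm of a real square matrix: the sum of its singular values. -/
noncomputable def nuclearNorm {m : ℕ} (A : Matrix (Fin m) (Fin m) ℝ) : ℝ :=
  ∑ j, svRaw A j

/-- The smallest eigenvalue of a symmetric real matrix, via the Rayleigh quotient. -/
noncomputable def lamMin {m : ℕ} (A : Matrix (Fin m) (Fin m) ℝ) : ℝ :=
  sInf {r : ℝ | ∃ x : Fin m → ℝ, vnorm x = 1 ∧ r = x ⬝ᵥ (A *ᵥ x)}

local notation "⟪" x ", " y "⟫" => @inner ℝ _ _ x y

namespace Defl

variable {n : ℕ}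

noncomputable def toE (x : Fin n → ℝ) : EuclideanSpace ℝ (Fin n) :=
  (WithLp.equiv 2 (Fin n → ℝ)).symm x

noncomputable def unE (x : EuclideanSpace ℝ (Fin n)) : Fin n → ℝ :=
  (WithLp.equiv 2 (Fin n → ℝ)) x

@[simp] lemma unE_toE (x : Fin n → ℝ) : unE (toE x) = x := rfl
@[simp] lemma toE_unE (x : EuclideanSpace ℝ (Fin n)) : toE (unE x) = x := rfl
@[simp] lemma unE_add (x y : EuclideanSpace ℝ (Fin n)) : unE (x + y) = unE x + unE y := rfl
@[simp] lemma unE_smul (c : ℝ) (x : EuclideanSpace ℝ (Fin n)) : unE (c • x) = c • unE x := rfl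

lemma inner_eq_dot (x y : Fin n → ℝ) : ⟪toE x, toE y⟫ = x ⬝ᵥ y := by
  simp [toE, PiLp.inner_apply, dotProduct, RCLike.inner_apply, mul_comm]

lemma vnorm_eq (x : Fin n → ℝ) : Real.sqrt (∑ i, (x i) ^ 2) = ‖toE x‖ := by
  rw [EuclideanSpace.norm_eq]
  congr 1
  refine Finset.sum_congr rfl fun i _ => ?_
  rw [Real.norm_eq_abs, sq_abs]
  rfl

variable {H : Matrix (Fin n) (Fin n) ℝ} (hH : H.IsHermitian)

/-- coordinates of a vector in the eigenbasis -/
noncomputable def coord (j : Fin n) (x : Fin n → ℝ) : ℝ :=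
  ⟪(hH.eigenvectorBasis j : EuclideanSpace ℝ (Fin n)), toE x⟫

lemma dot_eq_sum_coord (x y : Fin n → ℝ) :
    x ⬝ᵥ y = ∑ j, coord hH j x * coord hH j y := by
  rw [← inner_eq_dot]
  rw [← (hH.eigenvectorBasis).repr.inner_map_map (toE x) (toE y)]
  rw [PiLp.inner_apply]
  refine Finset.sum_congr rfl fun j _ => ?_
  rw [OrthonormalBasis.repr_apply_apply, OrthonormalBasis.repr_apply_apply]
  simp [coord, RCLike.inner_apply, mul_comm]

lemma coord_mulVec (j : Fin n) (x : Fin n → ℝ) :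
    coord hH j (H *ᵥ x) = hH.eigenvalues j * coord hH j x := by
  have hsym : Hᵀ = H := by
    have := hH
    rwa [Matrix.IsHermitian, conjTranspose_eq_transpose_of_trivial] at this
  unfold coord
  rw [← toE_unE (hH.eigenvectorBasis j), inner_eq_dot, inner_eq_dot,
    dotProduct_mulVec, ← mulVec_transpose, hsym]
  have hmv : H *ᵥ (unE (hH.eigenvectorBasis j))
      = hH.eigenvalues j • (unE (hH.eigenvectorBasis j)) :=
    hH.mulVec_eigenvectorBasis j
  rw [hmv, smul_dotProduct, smul_eq_mul]

lemma rayleigh_eq (x : Fin n → ℝ) :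
    x ⬝ᵥ (H *ᵥ x) = ∑ j, hH.eigenvalues j * (coord hH j x) ^ 2 := by
  rw [dot_eq_sum_coord hH]
  refine Finset.sum_congr rfl fun j _ => ?_
  rw [coord_mulVec hH]
  ring

lemma dot_self_eq (x : Fin n → ℝ) : x ⬝ᵥ x = ∑ j, (coord hH j x) ^ 2 := by
  rw [dot_eq_sum_coord hH]
  refine Finset.sum_congr rfl fun j _ => ?_
  ring

lemma coord_unE (k : Fin n) (a : EuclideanSpace ℝ (Fin n)) :
    coord hH k (unE a) = ⟪(hH.eigenvectorBasis k : EuclideanSpace ℝ (Fin n)), a⟫ := by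
  rw [coord, toE_unE]

/-- descending `t`-th eigenvalue (1-based); 0 out of range -/
noncomputable def lam (t : ℕ) : ℝ :=
  if h : 1 ≤ t ∧ t ≤ n then
    (hH.eigenvalues ∘ Tuple.sort hH.eigenvalues) ⟨n - t, by omega⟩ else 0

lemma lam_eq (t : ℕ) (h : 1 ≤ t ∧ t ≤ n) :
    lam hH t = (hH.eigenvalues ∘ Tuple.sort hH.eigenvalues) ⟨n - t, by omega⟩ := by
  rw [lam, dif_pos h]

/-- counting: at least `t` eigenvalues are `> c` whenever `c < lam t`. -/
lemma card_gt_of_lt_lam (t : ℕ) (h : 1 ≤ t ∧ t ≤ n) (c : ℝ) (hc : c < lam hH t) :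
    t ≤ (univ.filter fun j => c < hH.eigenvalues j).card := by
  classical
  set σ := Tuple.sort hH.eigenvalues with hσ
  have hcard : (univ.filter fun p : Fin n => c < hH.eigenvalues (σ p)).card
      = (univ.filter fun j => c < hH.eigenvalues j).card := by
    apply Finset.card_bij (fun p _ => σ p)
    · intro p hp; simp only [mem_filter, mem_univ, true_and] at hp ⊢; exact hp
    · intro a ha b hb hab; exact σ.injective hab
    · intro j hj; refine ⟨σ.symm j, ?_, by simp⟩
      simp only [mem_filter, mem_univ, true_and] at hj ⊢
      simpa using hj
  rw [← hcard]
  have hsub : Finset.Ici (⟨n - t, by omega⟩ : Fin n)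
      ⊆ univ.filter fun p : Fin n => c < hH.eigenvalues (σ p) := by
    intro p hp
    simp only [Finset.mem_Ici] at hp
    simp only [mem_filter, mem_univ, true_and]
    refine lt_of_lt_of_le ?_ (Tuple.monotone_sort hH.eigenvalues hp)
    rw [lam_eq hH t h] at hc
    exact hc
  calc t = (Finset.Ici (⟨n - t, by omega⟩ : Fin n)).card := by
            rw [Fin.card_Ici]; simp; omega
    _ ≤ _ := Finset.card_le_card hsub

/-- counting: at least `n − t + 1` eigenvalues are `≤ c` whenever `lam t ≤ c`. -/
lemma card_le_of_lam_le (t : ℕ) (h : 1 ≤ t ∧ t ≤ n) (c : ℝ) (hc : lam hH t ≤ c) :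
    n - t + 1 ≤ (univ.filter fun j => hH.eigenvalues j ≤ c).card := by
  classical
  set σ := Tuple.sort hH.eigenvalues with hσ
  have hcard : (univ.filter fun p : Fin n => hH.eigenvalues (σ p) ≤ c).card
      = (univ.filter fun j => hH.eigenvalues j ≤ c).card := by
    apply Finset.card_bij (fun p _ => σ p)
    · intro p hp; simp only [mem_filter, mem_univ, true_and] at hp ⊢; exact hp
    · intro a ha b hb hab; exact σ.injective hab
    · intro j hj; refine ⟨σ.symm j, ?_, by simp⟩
      simp only [mem_filter, mem_univ, true_and] at hj ⊢
      simpa using hj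
  rw [← hcard]
  have hsub : Finset.Iic (⟨n - t, by omega⟩ : Fin n)
      ⊆ univ.filter fun p : Fin n => hH.eigenvalues (σ p) ≤ c := by
    intro p hp
    simp only [Finset.mem_Iic] at hp
    simp only [mem_filter, mem_univ, true_and]
    refine le_trans (Tuple.monotone_sort hH.eigenvalues hp) ?_
    rw [lam_eq hH t h] at hc
    exact hc
  calc n - t + 1 = (Finset.Iic (⟨n - t, by omega⟩ : Fin n)).card := by
            rw [Fin.card_Iic]
    _ ≤ _ := Finset.card_le_card hsub

lemma eig_le_lam_one (j : Fin n) (hn : 1 ≤ n) : hH.eigenvalues j ≤ lam hH 1 := by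
  set σ := Tuple.sort hH.eigenvalues with hσ
  have hj : hH.eigenvalues j = (hH.eigenvalues ∘ σ) (σ.symm j) := by simp
  rw [lam_eq hH 1 ⟨le_refl 1, hn⟩, hj]
  refine Tuple.monotone_sort hH.eigenvalues ?_
  have := (σ.symm j).isLt
  rw [Fin.le_def]
  simp only []
  omega

lemma lam_antitone {s t : ℕ} (hs : 1 ≤ s) (hst : s ≤ t) (ht : t ≤ n) :
    lam hH t ≤ lam hH s := by
  rw [lam_eq hH t ⟨by omega, ht⟩, lam_eq hH s ⟨hs, by omega⟩]
  refine Tuple.monotone_sort hH.eigenvalues ?_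
  rw [Fin.le_def]
  simp only []
  omega

lemma lam_nonneg (hpsd : ∀ j, 0 ≤ hH.eigenvalues j) (t : ℕ) : 0 ≤ lam hH t := by
  rw [lam]
  split
  · exact hpsd _
  · exact le_refl 0

/-- span of a subset of the eigenbasis -/
noncomputable def VS (s : Finset (Fin n)) : Submodule ℝ (EuclideanSpace ℝ (Fin n)) :=
  Submodule.span ℝ (hH.eigenvectorBasis '' (s : Set (Fin n)))

lemma card_le_finrank_VS (s : Finset (Fin n)) :
    s.card ≤ Module.finrank ℝ (VS hH s) := by
  classical
  have hli : LinearIndependent ℝ (fun j : {j // j ∈ s} => hH.eigenvectorBasis j) :=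
    (hH.eigenvectorBasis.orthonormal.comp Subtype.val Subtype.val_injective).linearIndependent
  have hr : Set.range (fun j : {j // j ∈ s} => hH.eigenvectorBasis j)
      = hH.eigenvectorBasis '' (s : Set (Fin n)) := by
    ext x
    simp [Set.mem_image, Set.mem_range]
  have := finrank_span_eq_card hli
  rw [hr] at this
  rw [VS, this, Fintype.card_coe]

lemma coord_eq_zero_of_mem_VS {s : Finset (Fin n)} {x : EuclideanSpace ℝ (Fin n)}
    (hx : x ∈ VS hH s) {j : Fin n} (hj : j ∉ s) : coord hH j (unE x) = 0 := by
  have key : ∀ y ∈ VS hH s, ⟪(hH.eigenvectorBasis j : EuclideanSpace ℝ (Fin n)), y⟫ = (0:ℝ) := by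
    intro y hy
    induction hy using Submodule.span_induction with
    | mem y hmem =>
      obtain ⟨i, his, rfl⟩ := hmem
      have : j ≠ i := fun h => hj (h ▸ his)
      exact hH.eigenvectorBasis.orthonormal.2 this
    | zero => exact inner_zero_right _
    | add a b ha hb iha ihb => rw [inner_add_right, iha, ihb]; ring
    | smul c a ha iha => rw [inner_smul_right, iha]; ring
  have := key x hx
  rw [coord, toE_unE]
  exact this

lemma dot_self_pos {x : Fin n → ℝ} (hx : x ≠ 0) : 0 < x ⬝ᵥ x := by
  have h0 : ∀ i, 0 ≤ x i * x i := fun i => mul_self_nonneg _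
  rcases Function.ne_iff.mp hx with ⟨i, hi⟩
  exact Finset.sum_pos' (fun i _ => h0 i) ⟨i, Finset.mem_univ i, mul_self_pos.mpr hi⟩

lemma exists_ne_zero_mem_inf {S T : Submodule ℝ (EuclideanSpace ℝ (Fin n))}
    (h : n + 1 ≤ Module.finrank ℝ S + Module.finrank ℝ T) :
    ∃ x : EuclideanSpace ℝ (Fin n), x ∈ S ⊓ T ∧ x ≠ 0 := by
  have hsup : Module.finrank ℝ (S ⊔ T : Submodule ℝ (EuclideanSpace ℝ (Fin n))) ≤ n := by
    have := Submodule.finrank_le (S ⊔ T : Submodule ℝ (EuclideanSpace ℝ (Fin n)))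
    simpa [finrank_euclideanSpace] using this
  have heq := Submodule.finrank_sup_add_finrank_inf_eq S T
  have hpos : 0 < Module.finrank ℝ (S ⊓ T : Submodule ℝ (EuclideanSpace ℝ (Fin n))) := by omega
  have : Nontrivial (S ⊓ T : Submodule ℝ (EuclideanSpace ℝ (Fin n))) :=
    Module.nontrivial_of_finrank_pos hpos
  obtain ⟨x, hx⟩ := exists_ne (0 : (S ⊓ T : Submodule ℝ (EuclideanSpace ℝ (Fin n))))
  exact ⟨x, x.2, fun h => hx (Subtype.ext h)⟩

/-- Courant–Fischer, easy direction (lower bound): a `t`-dimensional subspace on which the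
Rayleigh quotient is at least `c` forces the `t`-th largest eigenvalue to be at least `c`. -/
lemma cf_lower (t : ℕ) (h : 1 ≤ t ∧ t ≤ n) (c : ℝ)
    (S : Submodule ℝ (EuclideanSpace ℝ (Fin n))) (hdim : t ≤ Module.finrank ℝ S)
    (hray : ∀ x : EuclideanSpace ℝ (Fin n), x ∈ S →
      c * (unE x ⬝ᵥ unE x) ≤ unE x ⬝ᵥ (H *ᵥ unE x)) :
    c ≤ lam hH t := by
  classical
  by_contra hcon
  push_neg at hcon
  set bad : Finset (Fin n) := univ.filter fun j => hH.eigenvalues j ≤ lam hH t with hbad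
  have hcardbad : n - t + 1 ≤ bad.card := card_le_of_lam_le hH t h _ (le_refl _)
  have hTdim : n - t + 1 ≤ Module.finrank ℝ (VS hH bad) :=
    le_trans hcardbad (card_le_finrank_VS hH bad)
  obtain ⟨x, hmem, hx0⟩ := exists_ne_zero_mem_inf (S := S) (T := VS hH bad) (by omega)
  have hxS := hmem.1
  have hxT := hmem.2
  have hxne : unE x ≠ 0 := fun hh => hx0 (by
    have : toE (unE x) = toE 0 := by rw [hh]
    rw [toE_unE] at this
    simpa [toE] using this)
  have hpos : 0 < unE x ⬝ᵥ unE x := dot_self_pos hxne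
  have hterm : ∀ j, hH.eigenvalues j * (coord hH j (unE x)) ^ 2
      ≤ lam hH t * (coord hH j (unE x)) ^ 2 := by
    intro j
    by_cases hj : j ∈ bad
    · have : hH.eigenvalues j ≤ lam hH t := by
        simp only [hbad, mem_filter] at hj; exact hj.2
      nlinarith [sq_nonneg (coord hH j (unE x))]
    · rw [coord_eq_zero_of_mem_VS hH hxT hj]; ring_nf; exact le_refl _
  have h1 : unE x ⬝ᵥ (H *ᵥ unE x) ≤ lam hH t * (unE x ⬝ᵥ unE x) := by
    rw [rayleigh_eq hH, dot_self_eq hH, Finset.mul_sum]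
    exact Finset.sum_le_sum fun j _ => hterm j
  have h2 := hray x hxS
  nlinarith

/-- Courant–Fischer, easy direction (upper bound): an `n−t+1`-dimensional subspace on which the
Rayleigh quotient is at most `c` forces the `t`-th largest eigenvalue to be at most `c`. -/
lemma cf_upper (t : ℕ) (h : 1 ≤ t ∧ t ≤ n) (c : ℝ)
    (S : Submodule ℝ (EuclideanSpace ℝ (Fin n))) (hdim : n - t + 1 ≤ Module.finrank ℝ S)
    (hray : ∀ x : EuclideanSpace ℝ (Fin n), x ∈ S →
      unE x ⬝ᵥ (H *ᵥ unE x) ≤ c * (unE x ⬝ᵥ unE x)) :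
    lam hH t ≤ c := by
  classical
  by_contra hcon
  push_neg at hcon
  set big : Finset (Fin n) := univ.filter fun j => c < hH.eigenvalues j with hbig
  have hcardbig : t ≤ big.card := card_gt_of_lt_lam hH t h _ hcon
  have hTdim : t ≤ Module.finrank ℝ (VS hH big) :=
    le_trans hcardbig (card_le_finrank_VS hH big)
  obtain ⟨x, hmem, hx0⟩ := exists_ne_zero_mem_inf (S := S) (T := VS hH big) (by omega)
  have hxS := hmem.1
  have hxT := hmem.2
  have hxne : unE x ≠ 0 := fun hh => hx0 (by
    have : toE (unE x) = toE 0 := by rw [hh]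
    rw [toE_unE] at this
    simpa [toE] using this)
  have hterm : ∀ j, c * (coord hH j (unE x)) ^ 2
      ≤ hH.eigenvalues j * (coord hH j (unE x)) ^ 2 := by
    intro j
    by_cases hj : j ∈ big
    · have : c < hH.eigenvalues j := by
        simp only [hbig, mem_filter] at hj; exact hj.2
      nlinarith [sq_nonneg (coord hH j (unE x))]
    · rw [coord_eq_zero_of_mem_VS hH hxT hj]; ring_nf; exact le_refl _
  obtain ⟨i, hi⟩ := Function.ne_iff.mp hxne
  have hicoord : ∃ j, coord hH j (unE x) ≠ 0 := by
    by_contra hall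
    push_neg at hall
    have : unE x ⬝ᵥ unE x = 0 := by
      rw [dot_self_eq hH]
      exact Finset.sum_eq_zero fun j _ => by rw [hall j]; ring
    exact absurd this (ne_of_gt (dot_self_pos hxne))
  obtain ⟨j0, hj0⟩ := hicoord
  have hj0big : j0 ∈ big := by
    by_contra hh
    exact hj0 (coord_eq_zero_of_mem_VS hH hxT hh)
  have hj0lt : c < hH.eigenvalues j0 := by
    simp only [hbig, mem_filter] at hj0big; exact hj0big.2
  have h1 : c * (unE x ⬝ᵥ unE x) < unE x ⬝ᵥ (H *ᵥ unE x) := by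
    rw [rayleigh_eq hH, dot_self_eq hH, Finset.mul_sum]
    refine Finset.sum_lt_sum (fun j _ => hterm j) ⟨j0, Finset.mem_univ j0, ?_⟩
    have : 0 < (coord hH j0 (unE x))^2 := by positivity
    nlinarith
  have h2 := hray x hxS
  nlinarith

/-- The scalar inequality at the heart of the deflation step. -/
lemma star_ineq (μ1 μ E X Wp Wm Sν : ℝ)
    (hX : X ≤ μ1 * Wp) (hWm : Wm ≤ μ * Sν) (hSν : (μ1 - μ) * Sν ≤ E) (hE : 0 ≤ E)
    (hsum : Wp + Wm = μ1 - E) (hWp : 0 ≤ Wp) (hWm0 : 0 ≤ Wm) (hμ : 0 ≤ μ) (hSν0 : 0 ≤ Sν) :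
    (X - (μ + E) * Wp) * (E + Wm) ≤ E * Wp ^ 2 := by
  rcases le_or_gt (μ1 - μ - E) 0 with hD | hD
  · have h1 : X - (μ + E) * Wp ≤ 0 := by nlinarith
    have h2 : 0 ≤ E + Wm := by linarith
    nlinarith
  · -- D > 0 case
    have hμ1μ : 0 ≤ μ1 - μ := by linarith
    have hDWm : (μ1 - μ - E) * Wm ≤ μ * E - E * Wm := by nlinarith
    have hDE : (μ1 - μ - E) * (E + Wm) ≤ E * Wp := by nlinarith
    have hXD : X - (μ + E) * Wp ≤ (μ1 - μ - E) * Wp := by nlinarith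
    nlinarith

lemma rayleigh_deflate (w x : Fin n → ℝ) :
    x ⬝ᵥ ((H - vecMulVec w w) *ᵥ x)
      = x ⬝ᵥ (H *ᵥ x) - (w ⬝ᵥ x) ^ 2 := by
  have hmv : (vecMulVec w w) *ᵥ x = (w ⬝ᵥ x) • w := by
    ext i
    simp only [mulVec, vecMulVec_apply, dotProduct, Pi.smul_apply, smul_eq_mul]
    rw [Finset.sum_mul]
    refine Finset.sum_congr rfl fun j _ => ?_
    ring
  rw [Matrix.sub_mulVec, dotProduct_sub, hmv, dotProduct_smul, smul_eq_mul]
  have : x ⬝ᵥ w = w ⬝ᵥ x := dotProduct_comm _ _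
  rw [this]
  ring

lemma hermitian_deflate (hsym : H.IsHermitian) (w : Fin n → ℝ) :
    (H - vecMulVec w w).IsHermitian := by
  refine Matrix.IsHermitian.sub hsym ?_
  show (vecMulVec w w)ᴴ = vecMulVec w w
  ext i j
  simp [conjTranspose_apply, vecMulVec_apply, mul_comm]

section PerStep

set_option maxHeartbeats 2000000

variable (hpsd : ∀ j, 0 ≤ hH.eigenvalues j) (u : Fin n → ℝ)
  (hu : u ⬝ᵥ (H *ᵥ u) = 1)
  (hN : (H - vecMulVec (H *ᵥ u) (H *ᵥ u)).IsHermitian)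

/-- Per-step lower bound: deflating by one vector decreases the `t`-th descending eigenvalue
by at most one position. -/
theorem perstep_lower (t : ℕ) (ht : 1 ≤ t) (htn : t + 1 ≤ n) :
    lam hH (t+1) ≤ lam hN t := by
  classical
  set w := H *ᵥ u with hw
  set μ := lam hH (t+1) with hμdef
  set Top : Finset (Fin n) := univ.filter (fun j => μ ≤ hH.eigenvalues j) with hTop
  -- Top has at least t+1 elements
  have hTopcard : t + 1 ≤ Top.card := by
    have hcard : (univ.filter fun p : Fin n =>
        μ ≤ (hH.eigenvalues ∘ Tuple.sort hH.eigenvalues) p).card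
        = (univ.filter fun j => μ ≤ hH.eigenvalues j).card := by
      apply Finset.card_bij (fun p _ => Tuple.sort hH.eigenvalues p)
      · intro p hp; simp only [mem_filter, mem_univ, true_and] at hp ⊢; exact hp
      · intro a _ b _ hab; exact (Tuple.sort hH.eigenvalues).injective hab
      · intro j hj; refine ⟨(Tuple.sort hH.eigenvalues).symm j, ?_, by simp⟩
        simp only [mem_filter, mem_univ, true_and, Function.comp] at hj ⊢
        simpa using hj
    rw [hTop, ← hcard]
    have hsub : Finset.Ici (⟨n - (t+1), by omega⟩ : Fin n)
        ⊆ univ.filter fun p : Fin n =>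
          μ ≤ (hH.eigenvalues ∘ Tuple.sort hH.eigenvalues) p := by
      intro p hp
      simp only [Finset.mem_Ici] at hp
      simp only [mem_filter, mem_univ, true_and]
      refine le_trans ?_ (Tuple.monotone_sort hH.eigenvalues hp)
      rw [hμdef, lam_eq hH (t+1) ⟨by omega, htn⟩]
    calc t + 1 = (Finset.Ici (⟨n - (t+1), by omega⟩ : Fin n)).card := by
          rw [Fin.card_Ici]; simp; omega
      _ ≤ _ := Finset.card_le_card hsub
  -- the w-orthogonal functional
  set f : EuclideanSpace ℝ (Fin n) →ₗ[ℝ] ℝ :=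
    { toFun := fun x => w ⬝ᵥ unE x
      map_add' := fun a b => by simp [dotProduct_add]
      map_smul' := fun c a => by simp [dotProduct_smul] } with hf
  have hkerdim : n - 1 ≤ Module.finrank ℝ (LinearMap.ker f) := by
    have := LinearMap.finrank_range_add_finrank_ker f
    rw [finrank_euclideanSpace, Fintype.card_fin] at this
    have hr : Module.finrank ℝ (LinearMap.range f) ≤ 1 := by
      have := Submodule.finrank_le (LinearMap.range f)
      simpa [Module.finrank_self] using this
    omega
  have hSdim : t ≤ Module.finrank ℝ (VS hH Top ⊓ LinearMap.ker f
      : Submodule ℝ (EuclideanSpace ℝ (Fin n))) := by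
    have hsup : Module.finrank ℝ (VS hH Top ⊔ LinearMap.ker f
        : Submodule ℝ (EuclideanSpace ℝ (Fin n))) ≤ n := by
      have := Submodule.finrank_le (VS hH Top ⊔ LinearMap.ker f
        : Submodule ℝ (EuclideanSpace ℝ (Fin n)))
      simpa [finrank_euclideanSpace, Fintype.card_fin] using this
    have heq := Submodule.finrank_sup_add_finrank_inf_eq (VS hH Top) (LinearMap.ker f)
    have hT := le_trans hTopcard (card_le_finrank_VS hH Top)
    omega
  refine cf_lower hN t ⟨ht, by omega⟩ μ (VS hH Top ⊓ LinearMap.ker f) hSdim ?_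
  intro x hx
  rw [rayleigh_deflate (H := H) w (unE x)]
  have hker : w ⬝ᵥ unE x = 0 := hx.2
  rw [hker]
  have hterm : ∀ j, μ * (coord hH j (unE x)) ^ 2 ≤ hH.eigenvalues j * (coord hH j (unE x)) ^ 2 := by
    intro j
    by_cases hj : j ∈ Top
    · have : μ ≤ hH.eigenvalues j := by
        simp only [hTop, mem_filter] at hj; exact hj.2
      nlinarith [sq_nonneg (coord hH j (unE x))]
    · rw [coord_eq_zero_of_mem_VS hH hx.1 hj]; ring_nf; exact le_refl _
  have h1 : μ * (unE x ⬝ᵥ unE x) ≤ unE x ⬝ᵥ (H *ᵥ unE x) := by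
    rw [rayleigh_eq hH, dot_self_eq hH, Finset.mul_sum]
    exact Finset.sum_le_sum fun j _ => hterm j
  nlinarith

/-- final scalar step -/
lemma final_scalar (X' γ Wp Wm E s nsq : ℝ)
    (hstar : X' * (E + Wm) ≤ E * Wp ^ 2) (hs : s ^ 2 ≤ Wm * nsq)
    (hE : 0 ≤ E) (hWm : 0 ≤ Wm) (hWp : 0 ≤ Wp) (hnsq : 0 ≤ nsq)
    (hX3 : X' ≤ (Wp + Wm) * Wp) :
    γ ^ 2 * X' ≤ (γ * Wp + s) ^ 2 + E * nsq := by
  rcases eq_or_lt_of_le (by positivity : (0:ℝ) ≤ E + Wm) with hzero | hpos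
  · -- E = 0, Wm = 0, s = 0
    have hE0 : E = 0 := by nlinarith
    have hWm0 : Wm = 0 := by nlinarith
    have hs0 : s = 0 := by nlinarith [sq_nonneg s]
    subst hE0 hWm0
    rw [hs0]
    have : X' ≤ Wp ^ 2 := by nlinarith
    nlinarith [sq_nonneg γ, sq_nonneg (γ * Wp)]
  · set q := γ * Wp + s with hq
    -- key: E * (q - s)^2 ≤ (q^2 + E*nsq) * (E + Wm)
    have hkey : E * (q - s) ^ 2 ≤ (q ^ 2 + E * nsq) * (E + Wm) := by
      rcases eq_or_lt_of_le hWm with hWm0 | hWmpos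
      · have hs0 : s = 0 := by nlinarith [sq_nonneg s]
        rw [hs0]
        nlinarith [sq_nonneg q, mul_nonneg hE hnsq]
      · -- Wm > 0
        have h1 : 0 ≤ (Wm * q + E * s) ^ 2 := sq_nonneg _
        have h2 : E ^ 2 * s ^ 2 ≤ E ^ 2 * (Wm * nsq) := by nlinarith [sq_nonneg E]
        have h4 : Wm * (-(2 * E * q * s)) ≤ Wm * (Wm * q ^ 2 + E ^ 2 * nsq) := by nlinarith
        have h5 : -(2 * E * q * s) ≤ Wm * q ^ 2 + E ^ 2 * nsq :=
          le_of_mul_le_mul_left h4 hWmpos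
        have h6 : E * s ^ 2 ≤ E * (Wm * nsq) := mul_le_mul_of_nonneg_left hs hE
        nlinarith [sq_nonneg q, mul_nonneg hE hnsq]
    have hmul : (γ ^ 2 * X') * (E + Wm) ≤ ((q ^ 2 + E * nsq)) * (E + Wm) := by
      have h1 : (γ ^ 2 * X') * (E + Wm) = γ ^ 2 * (X' * (E + Wm)) := by ring
      have h2 : γ ^ 2 * (X' * (E + Wm)) ≤ γ ^ 2 * (E * Wp ^ 2) := by
        have := sq_nonneg γ
        nlinarith
      have h3 : γ ^ 2 * (E * Wp ^ 2) = E * (q - s) ^ 2 := by rw [hq]; ring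
      linarith
    have := le_of_mul_le_mul_right hmul hpos
    linarith [this]

/-- Per-step upper bound: deflating by an approximate top eigenvector pushes the spectrum
down one position, up to the approximation error `E`. -/
theorem perstep_upper (hpsd : ∀ j, 0 ≤ hH.eigenvalues j) (u : Fin n → ℝ)
    (hu : u ⬝ᵥ (H *ᵥ u) = 1)
    (hN : (H - vecMulVec (H *ᵥ u) (H *ᵥ u)).IsHermitian)
    (t : ℕ) (ht : 1 ≤ t) (htn : t + 1 ≤ n) :
    lam hN t ≤ lam hH (t+1) + (lam hH 1 - (H *ᵥ u) ⬝ᵥ (H *ᵥ u)) := by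
  classical
  set w := H *ᵥ u with hw
  set μ := lam hH (t+1) with hμdef
  set μ1 := lam hH 1 with hμ1def
  set E := μ1 - w ⬝ᵥ w with hEdef
  have hn1 : 1 ≤ n := by omega
  have hμ0 : 0 ≤ μ := lam_nonneg hH hpsd _
  have hμ10 : 0 ≤ μ1 := lam_nonneg hH hpsd _
  have heig_le : ∀ j, hH.eigenvalues j ≤ μ1 := fun j => eig_le_lam_one hH j hn1
  have hcw : ∀ j, coord hH j w = hH.eigenvalues j * coord hH j u := fun j => coord_mulVec hH j u
  have hνsum : ∑ j, hH.eigenvalues j * (coord hH j u) ^ 2 = 1 := by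
    rw [← rayleigh_eq hH u]; exact hu
  have hww : w ⬝ᵥ w = ∑ j, hH.eigenvalues j * (hH.eigenvalues j * (coord hH j u) ^ 2) := by
    rw [dot_self_eq hH w]
    refine Finset.sum_congr rfl fun j _ => ?_
    rw [hcw j]; ring
  have hν0 : ∀ j, 0 ≤ hH.eigenvalues j * (coord hH j u) ^ 2 :=
    fun j => mul_nonneg (hpsd j) (sq_nonneg _)
  have hE0 : 0 ≤ E := by
    rw [hEdef, hww]
    have h1 : ∑ j, hH.eigenvalues j * (hH.eigenvalues j * (coord hH j u) ^ 2)
        ≤ ∑ j, μ1 * (hH.eigenvalues j * (coord hH j u) ^ 2) := by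
      refine Finset.sum_le_sum fun j _ => ?_
      exact mul_le_mul_of_nonneg_right (heig_le j) (hν0 j)
    rw [← Finset.mul_sum, hνsum, mul_one] at h1
    linarith
  -- the target splits on whether μ1 ≤ μ + E
  have hEasyCase : lam hN t ≤ μ1 := by
    have h1 : lam hN 1 ≤ μ1 := by
      refine cf_upper hN 1 ⟨le_refl 1, hn1⟩ μ1 ⊤ (by rw [finrank_top, finrank_euclideanSpace, Fintype.card_fin]; omega) ?_
      intro x _
      rw [rayleigh_deflate (H := H) w (unE x)]
      have h2 : unE x ⬝ᵥ (H *ᵥ unE x) ≤ μ1 * (unE x ⬝ᵥ unE x) := by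
        rw [rayleigh_eq hH, dot_self_eq hH, Finset.mul_sum]
        refine Finset.sum_le_sum fun j _ => ?_
        exact mul_le_mul_of_nonneg_right (heig_le j) (sq_nonneg _)
      nlinarith [sq_nonneg (w ⬝ᵥ unE x)]
    have h2 : lam hN t ≤ lam hN 1 := by
      rcases eq_or_lt_of_le ht with h | h
      · rw [← h]
      · exact lam_antitone hN (le_refl 1) (by omega) (by omega)
    linarith
  rcases le_or_gt μ1 (μ + E) with hcase | hcase
  · linarith
  -- main case : D := μ1 - μ - E > 0
  set p : Fin n → Prop := fun j => μ < hH.eigenvalues j with hp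
  set P : Finset (Fin n) := univ.filter p with hP
  set Pc : Finset (Fin n) := univ.filter (fun j => ¬ p j) with hPc
  have hPcard : P.card ≤ t := by
    have h1 := card_le_of_lam_le hH (t+1) ⟨by omega, htn⟩ μ (le_of_eq hμdef.symm)
    have h2 : (univ.filter fun j => hH.eigenvalues j ≤ μ) = Pc := by
      refine Finset.filter_congr fun j _ => ?_
      rw [hp]; simp [not_lt]
    rw [h2] at h1
    have h3 := Finset.card_filter_add_card_filter_not (s := univ) (p := p)
    rw [Finset.card_univ, Fintype.card_fin, ← hP, ← hPc] at h3
    omega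
  set X := ∑ j ∈ P, hH.eigenvalues j * (coord hH j w) ^ 2 with hX
  set Wp := ∑ j ∈ P, (coord hH j w) ^ 2 with hWp
  set Wm := ∑ j ∈ Pc, (coord hH j w) ^ 2 with hWm
  set Sν := ∑ j ∈ Pc, hH.eigenvalues j * (coord hH j u) ^ 2 with hSν
  have hWp0 : 0 ≤ Wp := Finset.sum_nonneg fun j _ => sq_nonneg _
  have hWm0 : 0 ≤ Wm := Finset.sum_nonneg fun j _ => sq_nonneg _
  have hSν0 : 0 ≤ Sν := Finset.sum_nonneg fun j _ => hν0 j
  have hsplitsum : Wp + Wm = w ⬝ᵥ w := by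
    rw [hWp, hWm, hP, hPc, dot_self_eq hH w]
    exact Finset.sum_filter_add_sum_filter_not univ p _
  have hXle : X ≤ μ1 * Wp := by
    rw [hX, hWp, Finset.mul_sum]
    exact Finset.sum_le_sum fun j _ => mul_le_mul_of_nonneg_right (heig_le j) (sq_nonneg _)
  have hWmle : Wm ≤ μ * Sν := by
    rw [hWm, hSν, Finset.mul_sum]
    refine Finset.sum_le_sum fun j hj => ?_
    have hjle : hH.eigenvalues j ≤ μ := by
      rw [hPc] at hj
      simp only [mem_filter, hp, not_lt] at hj
      exact hj.2
    rw [hcw j]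
    calc (hH.eigenvalues j * coord hH j u) ^ 2
        = hH.eigenvalues j * (hH.eigenvalues j * (coord hH j u) ^ 2) := by ring
      _ ≤ μ * (hH.eigenvalues j * (coord hH j u) ^ 2) :=
          mul_le_mul_of_nonneg_right hjle (hν0 j)
  have hSνle : (μ1 - μ) * Sν ≤ E := by
    have hEeq : E = ∑ j, (μ1 - hH.eigenvalues j) * (hH.eigenvalues j * (coord hH j u) ^ 2) := by
      have h0 : ∑ j, (μ1 - hH.eigenvalues j) * (hH.eigenvalues j * (coord hH j u) ^ 2)
          = μ1 * (∑ j, hH.eigenvalues j * (coord hH j u) ^ 2)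
            - ∑ j, hH.eigenvalues j * (hH.eigenvalues j * (coord hH j u) ^ 2) := by
        rw [Finset.mul_sum, ← Finset.sum_sub_distrib]
        refine Finset.sum_congr rfl fun j _ => ?_
        ring
      rw [hEdef, hww, h0, hνsum, mul_one]
    have h1 : ∑ j ∈ Pc, (μ1 - hH.eigenvalues j) * (hH.eigenvalues j * (coord hH j u) ^ 2)
        ≤ ∑ j, (μ1 - hH.eigenvalues j) * (hH.eigenvalues j * (coord hH j u) ^ 2) := by
      refine Finset.sum_le_sum_of_subset_of_nonneg (Finset.subset_univ _) fun j _ _ => ?_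
      exact mul_nonneg (by linarith [heig_le j]) (hν0 j)
    have h2 : (μ1 - μ) * Sν ≤ ∑ j ∈ Pc, (μ1 - hH.eigenvalues j)
        * (hH.eigenvalues j * (coord hH j u) ^ 2) := by
      rw [hSν, Finset.mul_sum]
      refine Finset.sum_le_sum fun j hj => ?_
      have hjle : hH.eigenvalues j ≤ μ := by
        rw [hPc] at hj
        simp only [mem_filter, hp, not_lt] at hj
        exact hj.2
      exact mul_le_mul_of_nonneg_right (by linarith) (hν0 j)
    rw [hEeq]
    linarith
  have hstar : (X - (μ + E) * Wp) * (E + Wm) ≤ E * Wp ^ 2 :=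
    star_ineq μ1 μ E X Wp Wm Sν hXle hWmle hSνle hE0 (by rw [hsplitsum, hEdef]; ring)
      hWp0 hWm0 hμ0 hSν0
  have hX3 : X - (μ + E) * Wp ≤ (Wp + Wm) * Wp := by
    have h1 : Wp + Wm = μ1 - E := by rw [hsplitsum, hEdef]; ring
    nlinarith
  have hWppos : 0 < Wp := by
    rcases eq_or_lt_of_le hWp0 with h | h
    · exfalso
      have hwwle : w ⬝ᵥ w ≤ μ := by
        have : Sν ≤ 1 := by
          rw [← hνsum, hSν]
          exact Finset.sum_le_sum_of_subset_of_nonneg (Finset.subset_univ _) fun j _ _ => hν0 j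
        nlinarith
      rw [hEdef] at hcase
      linarith
    · exact h
  -- construct wplus
  set wplus : EuclideanSpace ℝ (Fin n) := ∑ j ∈ P, (coord hH j w) • (hH.eigenvectorBasis j)
    with hwplus
  have hcoordwplus : ∀ k, (⟪(hH.eigenvectorBasis k : EuclideanSpace ℝ (Fin n)), wplus⟫ : ℝ)
      = if k ∈ P then coord hH k w else 0 := by
    intro k
    rw [hwplus, inner_sum]
    have : ∀ j ∈ P, (⟪(hH.eigenvectorBasis k : EuclideanSpace ℝ (Fin n)),
        (coord hH j w) • (hH.eigenvectorBasis j)⟫ : ℝ)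
        = (coord hH j w) * (if k = j then 1 else 0) := by
      intro j _
      rw [real_inner_smul_right]
      rw [orthonormal_iff_ite.mp hH.eigenvectorBasis.orthonormal]
    rw [Finset.sum_congr rfl this]
    simp only [mul_ite, mul_one, mul_zero]
    exact Finset.sum_ite_eq P k (fun j => coord hH j w)
  have hPnotPc : ∀ k, k ∈ P → k ∉ Pc := by
    intro k hk
    rw [hP] at hk
    rw [hPc]
    simp only [mem_filter, mem_univ, true_and] at hk ⊢
    exact not_not_intro hk
  have hPcmem : ∀ k, k ∈ Pc → hH.eigenvalues k ≤ μ := by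
    intro k hk
    rw [hPc] at hk
    simp only [mem_filter, mem_univ, true_and, hp, not_lt] at hk
    exact hk
  have hsplit : ∀ F : Fin n → ℝ, ∑ j, F j = (∑ j ∈ P, F j) + (∑ j ∈ Pc, F j) := by
    intro F
    rw [hP, hPc]
    exact (Finset.sum_filter_add_sum_filter_not univ p F).symm
  have hwplusne : wplus ≠ 0 := by
    intro h0
    have hWpz : Wp = 0 := by
      rw [hWp]
      refine Finset.sum_eq_zero fun j hj => ?_
      have h2 := hcoordwplus j
      rw [h0, inner_zero_right, if_pos hj] at h2
      rw [← h2]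
      ring
    linarith
  have hinf : VS hH Pc ⊓ (ℝ ∙ wplus) = ⊥ := by
    rw [Submodule.eq_bot_iff]
    intro x hx
    obtain ⟨hx1, hx2⟩ := hx
    obtain ⟨a, rfl⟩ := Submodule.mem_span_singleton.mp hx2
    rcases eq_or_ne a 0 with ha | ha
    · rw [ha, zero_smul]
    exfalso
    have hex : ∃ j ∈ P, coord hH j w ≠ 0 := by
      by_contra hall
      push_neg at hall
      have : Wp = 0 := Finset.sum_eq_zero fun j hj => by rw [hall j hj]; ring
      linarith
    obtain ⟨j, hjP, hjw⟩ := hex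
    have h1 : coord hH j (unE (a • wplus)) = 0 :=
      coord_eq_zero_of_mem_VS hH hx1 (hPnotPc j hjP)
    have h2 : coord hH j (unE (a • wplus)) = a * coord hH j w := by
      rw [coord_unE, real_inner_smul_right, hcoordwplus j, if_pos hjP]
    rw [h2] at h1
    rcases mul_eq_zero.mp h1 with h | h
    · exact ha h
    · exact hjw h
  have hdimS : n - t + 1 ≤ Module.finrank ℝ ((VS hH Pc ⊔ (ℝ ∙ wplus))
      : Submodule ℝ (EuclideanSpace ℝ (Fin n))) := by
    have heq := Submodule.finrank_sup_add_finrank_inf_eq (VS hH Pc) (ℝ ∙ wplus)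
    rw [hinf, finrank_bot, add_zero, finrank_span_singleton hwplusne] at heq
    have hPccard : n - t ≤ Pc.card := by
      have h3 := Finset.card_filter_add_card_filter_not (s := univ) (p := p)
      rw [Finset.card_univ, Fintype.card_fin, ← hP, ← hPc] at h3
      omega
    have h4 := card_le_finrank_VS hH Pc
    omega
  have hfinal : lam hN t ≤ μ + E := by
    refine cf_upper hN t ⟨ht, by omega⟩ (μ + E) (VS hH Pc ⊔ (ℝ ∙ wplus)) hdimS ?_
    intro x hx
    obtain ⟨y, hy, r, hr, rfl⟩ := Submodule.mem_sup.mp hx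
    obtain ⟨γ, rfl⟩ := Submodule.mem_span_singleton.mp hr
    rw [rayleigh_deflate (H := H) w]
    have hcyP : ∀ k, k ∈ P → coord hH k (unE y) = 0 := fun k hk =>
      coord_eq_zero_of_mem_VS hH hy (hPnotPc k hk)
    have hcxval : ∀ k, coord hH k (unE (y + γ • wplus))
        = (if k ∈ P then γ * coord hH k w else coord hH k (unE y)) := by
      intro k
      rw [coord_unE, inner_add_right, real_inner_smul_right, hcoordwplus k]
      by_cases hk : k ∈ P
      · rw [if_pos hk, if_pos hk, ← coord_unE hH, hcyP k hk]
        ring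
      · rw [if_neg hk, if_neg hk, ← coord_unE hH]
        ring
    set nsq := ∑ k ∈ Pc, (coord hH k (unE y)) ^ 2 with hnsq
    set sP := ∑ k ∈ Pc, (coord hH k w) * (coord hH k (unE y)) with hsP
    have hnsq0 : 0 ≤ nsq := Finset.sum_nonneg fun k _ => sq_nonneg _
    have hdotself : unE (y + γ • wplus) ⬝ᵥ unE (y + γ • wplus) = γ ^ 2 * Wp + nsq := by
      rw [dot_self_eq hH, hsplit]
      have h1 : ∑ j ∈ P, (coord hH j (unE (y + γ • wplus))) ^ 2 = γ ^ 2 * Wp := by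
        rw [hWp, Finset.mul_sum]
        refine Finset.sum_congr rfl fun j hj => ?_
        rw [hcxval j, if_pos hj]
        ring
      have h2 : ∑ j ∈ Pc, (coord hH j (unE (y + γ • wplus))) ^ 2 = nsq := by
        rw [hnsq]
        refine Finset.sum_congr rfl fun j hj => ?_
        have hjnP : j ∉ P := fun hc => hPnotPc j hc hj
        rw [hcxval j, if_neg hjnP]
      rw [h1, h2]
    have hrayx : unE (y + γ • wplus) ⬝ᵥ (H *ᵥ unE (y + γ • wplus)) ≤ γ ^ 2 * X + μ * nsq := by
      rw [rayleigh_eq hH, hsplit]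
      have h1 : ∑ j ∈ P, hH.eigenvalues j * (coord hH j (unE (y + γ • wplus))) ^ 2
          = γ ^ 2 * X := by
        rw [hX, Finset.mul_sum]
        refine Finset.sum_congr rfl fun j hj => ?_
        rw [hcxval j, if_pos hj]
        ring
      have h2 : ∑ j ∈ Pc, hH.eigenvalues j * (coord hH j (unE (y + γ • wplus))) ^ 2
          ≤ μ * nsq := by
        rw [hnsq, Finset.mul_sum]
        refine Finset.sum_le_sum fun j hj => ?_
        have hjnP : j ∉ P := fun hc => hPnotPc j hc hj
        rw [hcxval j, if_neg hjnP]
        exact mul_le_mul_of_nonneg_right (hPcmem j hj) (sq_nonneg _)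
      linarith
    have hwdot : w ⬝ᵥ unE (y + γ • wplus) = γ * Wp + sP := by
      rw [dot_eq_sum_coord hH, hsplit]
      have h1 : ∑ j ∈ P, coord hH j w * coord hH j (unE (y + γ • wplus)) = γ * Wp := by
        rw [hWp, Finset.mul_sum]
        refine Finset.sum_congr rfl fun j hj => ?_
        rw [hcxval j, if_pos hj]
        ring
      have h2 : ∑ j ∈ Pc, coord hH j w * coord hH j (unE (y + γ • wplus)) = sP := by
        rw [hsP]
        refine Finset.sum_congr rfl fun j hj => ?_
        have hjnP : j ∉ P := fun hc => hPnotPc j hc hj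
        rw [hcxval j, if_neg hjnP]
      rw [h1, h2]
    have hs2 : sP ^ 2 ≤ Wm * nsq := by
      rw [hsP, hWm, hnsq]
      exact Finset.sum_mul_sq_le_sq_mul_sq Pc _ _
    have hfs := final_scalar (X - (μ + E) * Wp) γ Wp Wm E sP nsq hstar hs2 hE0 hWm0 hWp0
      hnsq0 hX3
    rw [hdotself, hwdot]
    nlinarith [hrayx]
  exact hfinal

end PerStep

lemma lam_congr {A B : Matrix (Fin n) (Fin n) ℝ} (h : A = B) (hA : A.IsHermitian)
    (hB : B.IsHermitian) (t : ℕ) : lam hA t = lam hB t := by subst h; rfl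

lemma eig_congr {A B : Matrix (Fin n) (Fin n) ℝ} (h : A = B) (hA : A.IsHermitian)
    (hB : B.IsHermitian) : hA.eigenvalues = hB.eigenvalues := by subst h; rfl

lemma ww_le (hpsd : ∀ j, 0 ≤ hH.eigenvalues j) (u : Fin n → ℝ)
    (hu : u ⬝ᵥ (H *ᵥ u) = 1) (hn1 : 1 ≤ n) :
    (H *ᵥ u) ⬝ᵥ (H *ᵥ u) ≤ lam hH 1 := by
  have hνsum : ∑ j, hH.eigenvalues j * (coord hH j u) ^ 2 = 1 := by
    rw [← rayleigh_eq hH u]; exact hu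
  rw [dot_self_eq hH]
  have h1 : ∑ j, (coord hH j (H *ᵥ u)) ^ 2
      = ∑ j, hH.eigenvalues j * (hH.eigenvalues j * (coord hH j u) ^ 2) := by
    refine Finset.sum_congr rfl fun j _ => ?_
    rw [coord_mulVec hH]; ring
  have h2 : ∑ j, hH.eigenvalues j * (hH.eigenvalues j * (coord hH j u) ^ 2)
      ≤ ∑ j, lam hH 1 * (hH.eigenvalues j * (coord hH j u) ^ 2) := by
    refine Finset.sum_le_sum fun j _ => ?_
    exact mul_le_mul_of_nonneg_right (eig_le_lam_one hH j hn1)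
      (mul_nonneg (hpsd j) (sq_nonneg _))
  rw [h1]
  calc ∑ j, hH.eigenvalues j * (hH.eigenvalues j * (coord hH j u) ^ 2)
      ≤ ∑ j, lam hH 1 * (hH.eigenvalues j * (coord hH j u) ^ 2) := h2
    _ = lam hH 1 := by rw [← Finset.mul_sum, hνsum, mul_one]

lemma rayleigh_deflate_nonneg (hpsd : ∀ j, 0 ≤ hH.eigenvalues j) (u : Fin n → ℝ)
    (hu : u ⬝ᵥ (H *ᵥ u) = 1) (x : Fin n → ℝ) :
    0 ≤ x ⬝ᵥ ((H - vecMulVec (H *ᵥ u) (H *ᵥ u)) *ᵥ x) := by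
  rw [rayleigh_deflate]
  have hνsum : ∑ j, hH.eigenvalues j * (coord hH j u) ^ 2 = 1 := by
    rw [← rayleigh_eq hH u]; exact hu
  have hdot : (H *ᵥ u) ⬝ᵥ x = ∑ j, (Real.sqrt (hH.eigenvalues j) * coord hH j u)
      * (Real.sqrt (hH.eigenvalues j) * coord hH j x) := by
    rw [dot_eq_sum_coord hH]
    refine Finset.sum_congr rfl fun j _ => ?_
    rw [coord_mulVec hH]
    have h := Real.mul_self_sqrt (hpsd j)
    have h2 : (Real.sqrt (hH.eigenvalues j) * coord hH j u)
        * (Real.sqrt (hH.eigenvalues j) * coord hH j x)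
        = (Real.sqrt (hH.eigenvalues j) * Real.sqrt (hH.eigenvalues j))
          * (coord hH j u * coord hH j x) := by ring
    rw [h2, h]
    ring
  have hCS := Finset.sum_mul_sq_le_sq_mul_sq Finset.univ
    (fun j => Real.sqrt (hH.eigenvalues j) * coord hH j u)
    (fun j => Real.sqrt (hH.eigenvalues j) * coord hH j x)
  have hf : ∑ j, (Real.sqrt (hH.eigenvalues j) * coord hH j u) ^ 2 = 1 := by
    rw [← hνsum]
    refine Finset.sum_congr rfl fun j _ => ?_
    rw [mul_pow, Real.sq_sqrt (hpsd j)]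
  have hg : ∑ j, (Real.sqrt (hH.eigenvalues j) * coord hH j x) ^ 2 = x ⬝ᵥ (H *ᵥ x) := by
    rw [rayleigh_eq hH]
    refine Finset.sum_congr rfl fun j _ => ?_
    rw [mul_pow, Real.sq_sqrt (hpsd j)]
  rw [hf, hg, one_mul, ← hdot] at hCS
  linarith

lemma eig_nonneg_of_rayleigh {N : Matrix (Fin n) (Fin n) ℝ} (hNh : N.IsHermitian)
    (h : ∀ x, 0 ≤ x ⬝ᵥ (N *ᵥ x)) : ∀ j, 0 ≤ hNh.eigenvalues j := by
  intro j
  have h1 := h (unE (hNh.eigenvectorBasis j))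
  have hmv : N *ᵥ (unE (hNh.eigenvectorBasis j))
      = hNh.eigenvalues j • (unE (hNh.eigenvectorBasis j)) :=
    hNh.mulVec_eigenvectorBasis j
  rw [hmv, dotProduct_smul, smul_eq_mul] at h1
  have hnorm : (unE (hNh.eigenvectorBasis j)) ⬝ᵥ (unE (hNh.eigenvectorBasis j)) = 1 := by
    rw [← inner_eq_dot, toE_unE]
    have := orthonormal_iff_ite.mp hNh.eigenvectorBasis.orthonormal j j
    rw [if_pos rfl] at this
    exact this
  rw [hnorm, mul_one] at h1
  exact h1

lemma lam_one_deflate_le (w : Fin n → ℝ)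
    (hN : (H - vecMulVec w w).IsHermitian) (hn1 : 1 ≤ n) : lam hN 1 ≤ lam hH 1 := by
  refine cf_upper hN 1 ⟨le_refl 1, hn1⟩ (lam hH 1) ⊤
    (by rw [finrank_top, finrank_euclideanSpace, Fintype.card_fin]; omega) ?_
  intro x _
  rw [rayleigh_deflate (H := H) w (unE x)]
  have h2 : unE x ⬝ᵥ (H *ᵥ unE x) ≤ lam hH 1 * (unE x ⬝ᵥ unE x) := by
    rw [rayleigh_eq hH, dot_self_eq hH, Finset.mul_sum]
    refine Finset.sum_le_sum fun j _ => ?_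
    exact mul_le_mul_of_nonneg_right (eig_le_lam_one hH j hn1) (sq_nonneg _)
  nlinarith [sq_nonneg (w ⬝ᵥ unE x)]

/-! ### matrix algebra for deflation -/

lemma vecMulVec_conjT (a b : Fin n → ℝ) : (vecMulVec a b)ᴴ = vecMulVec b a := by
  ext i j
  simp [conjTranspose_apply, vecMulVec_apply, mul_comm]

lemma mul_vecMulVec (C : Matrix (Fin n) (Fin n) ℝ) (a b : Fin n → ℝ) :
    C * vecMulVec a b = vecMulVec (C *ᵥ a) b := by
  ext i j
  simp only [mul_apply, vecMulVec_apply, mulVec, dotProduct]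
  rw [Finset.sum_mul]
  refine Finset.sum_congr rfl fun k _ => ?_
  ring

lemma vecMulVec_mul (a b : Fin n → ℝ) (C : Matrix (Fin n) (Fin n) ℝ) :
    vecMulVec a b * C = vecMulVec a (b ᵥ* C) := by
  ext i j
  simp only [mul_apply, vecMulVec_apply, vecMul, dotProduct]
  rw [Finset.mul_sum]
  refine Finset.sum_congr rfl fun k _ => ?_
  ring

lemma vecMul_vecMulVec (a b c : Fin n → ℝ) :
    a ᵥ* vecMulVec b c = (a ⬝ᵥ b) • c := by
  ext j
  simp only [vecMul, vecMulVec_apply, dotProduct, Pi.smul_apply, smul_eq_mul]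
  rw [Finset.sum_mul]
  refine Finset.sum_congr rfl fun k _ => ?_
  ring

lemma deflate_matrix (Bm : Matrix (Fin n) (Fin n) ℝ) (z w : Fin n → ℝ)
    (hzz : z ⬝ᵥ z = 1) (hw : w = z ᵥ* Bm) :
    (Bm - vecMulVec z w)ᴴ * (Bm - vecMulVec z w) = Bmᴴ * Bm - vecMulVec w w := by
  have hBH : Bmᴴ = Bmᵀ := conjTranspose_eq_transpose_of_trivial Bm
  have h1 : Bmᴴ * vecMulVec z w = vecMulVec w w := by
    rw [mul_vecMulVec, hw, hBH, mulVec_transpose]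
  have h2 : (vecMulVec z w)ᴴ * Bm = vecMulVec w w := by
    rw [vecMulVec_conjT, vecMulVec_mul, ← hw]
  have h3 : (vecMulVec z w)ᴴ * vecMulVec z w = vecMulVec w w := by
    rw [vecMulVec_conjT, vecMulVec_mul, vecMul_vecMulVec, hzz, one_smul]
  rw [conjTranspose_sub, sub_mul, mul_sub, mul_sub, h1, h2, h3]
  abel

/-- The deflation chain: eigenvalue bounds accumulate linearly. -/
lemma chain (M : ℕ → Matrix (Fin n) (Fin n) ℝ) (hM : ∀ m, (M m).IsHermitian)
    (u : ℕ → Fin n → ℝ) (i : ℕ) (hi1 : 1 ≤ i) (hin : i ≤ n)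
    (hrec : ∀ m, 1 ≤ m → m < i →
      M (m+1) = M m - vecMulVec (M m *ᵥ u m) (M m *ᵥ u m))
    (hu : ∀ m, 1 ≤ m → m < i → u m ⬝ᵥ (M m *ᵥ u m) = 1)
    (hpsd1 : ∀ j, 0 ≤ (hM 1).eigenvalues j)
    (ε2 : ℝ) (hε2 : 0 ≤ ε2)
    (hEb : ∀ m, 1 ≤ m → m < i →
      lam (hM m) 1 - (M m *ᵥ u m) ⬝ᵥ (M m *ᵥ u m) ≤ ε2 * lam (hM m) 1) :
    (∀ j, 0 ≤ (hM i).eigenvalues j) ∧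
    lam (hM i) 1 ≤ lam (hM 1) 1 ∧
    lam (hM 1) i ≤ lam (hM i) 1 ∧
    lam (hM i) 1 ≤ lam (hM 1) i + ((i - 1 : ℕ) : ℝ) * (ε2 * lam (hM 1) 1) := by
  have hn1 : 1 ≤ n := le_trans hi1 hin
  have claim : ∀ d : ℕ, d + 1 ≤ i → (∀ j, 0 ≤ (hM (d+1)).eigenvalues j)
      ∧ lam (hM (d+1)) 1 ≤ lam (hM 1) 1
      ∧ ∀ t, 1 ≤ t → t + d ≤ n →
          lam (hM 1) (t+d) ≤ lam (hM (d+1)) t ∧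
          lam (hM (d+1)) t ≤ lam (hM 1) (t+d) + (d : ℝ) * (ε2 * lam (hM 1) 1) := by
    intro d
    induction d with
    | zero =>
      intro _
      refine ⟨hpsd1, le_refl _, fun t _ _ => ?_⟩
      simp
    | succ d ih =>
      intro hd2
      obtain ⟨ihpsd, ihmono, ihbounds⟩ := ih (by omega)
      have hrecm := hrec (d+1) (by omega) (by omega)
      have hum := hu (d+1) (by omega) (by omega)
      set w := M (d+1) *ᵥ u (d+1) with hwdef
      have hD : (M (d+1) - vecMulVec w w).IsHermitian := hermitian_deflate (hM (d+1)) w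
      have hlamtrans : ∀ t, lam (hM (d+1+1)) t = lam hD t := fun t =>
        lam_congr hrecm _ _ t
      have hpsdnew : ∀ j, 0 ≤ (hM (d+1+1)).eigenvalues j := by
        rw [eig_congr hrecm (hM (d+1+1)) hD]
        exact eig_nonneg_of_rayleigh hD
          (rayleigh_deflate_nonneg (hM (d+1)) ihpsd (u (d+1)) hum)
      have hmononew : lam (hM (d+1+1)) 1 ≤ lam (hM 1) 1 := by
        rw [hlamtrans 1]
        exact le_trans (lam_one_deflate_le (hM (d+1)) w hD hn1) ihmono
      refine ⟨hpsdnew, hmononew, fun t ht htd => ?_⟩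
      have hidx : t + 1 + d = t + (d + 1) := by omega
      have ihb := ihbounds (t+1) (by omega) (by omega)
      rw [hidx] at ihb
      constructor
      · rw [hlamtrans t]
        exact le_trans ihb.1 (perstep_lower (hM (d+1)) (u (d+1)) hD t ht (by omega))
      · rw [hlamtrans t]
        have hup := perstep_upper (hM (d+1)) ihpsd (u (d+1)) hum hD t ht (by omega)
        have hEm := hEb (d+1) (by omega) (by omega)
        have hL1 : 0 ≤ lam (hM (d+1)) 1 := lam_nonneg _ ihpsd _
        have hE2 : lam (hM (d+1)) 1 - w ⬝ᵥ w ≤ ε2 * lam (hM 1) 1 := by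
          calc lam (hM (d+1)) 1 - w ⬝ᵥ w ≤ ε2 * lam (hM (d+1)) 1 := hEm
            _ ≤ ε2 * lam (hM 1) 1 := mul_le_mul_of_nonneg_left ihmono hε2
        have := ihb.2
        push_cast
        push_cast at this
        linarith
  obtain ⟨hpsd, hmono, hbounds⟩ := claim (i - 1) (by omega)
  have hi' : i - 1 + 1 = i := by omega
  rw [hi'] at hpsd hmono hbounds
  have hb := hbounds 1 (le_refl 1) (by omega)
  have hIdx : 1 + (i - 1) = i := by omega
  rw [hIdx] at hb
  exact ⟨hpsd, hmono, hb.1, hb.2⟩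


/-- bridge from `sval` to the sorted eigenvalues of `AᴴA`. -/
lemma sval_eq (A : Matrix (Fin n) (Fin n) ℝ) (i : ℕ) :
    sval A i = Real.sqrt (lam (Matrix.isHermitian_conjTranspose_mul_self A) i) := by
  by_cases h : 1 ≤ i ∧ i ≤ n
  · rw [sval, lam, dif_pos h, dif_pos h]
    have hmono : Monotone (svRaw A
        ∘ ⇑(Tuple.sort (Matrix.isHermitian_conjTranspose_mul_self A).eigenvalues)) := by
      intro a b hab
      exact Real.sqrt_le_sqrt (Tuple.monotone_sort
        (Matrix.isHermitian_conjTranspose_mul_self A).eigenvalues hab)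
    have heq := Tuple.comp_sort_eq_comp_iff_monotone.mpr hmono
    rw [← heq]
    rfl
  · rw [sval, lam, dif_neg h, dif_neg h, Real.sqrt_zero]

lemma vnorm_eq_sqrt_dot (x : Fin n → ℝ) : vnorm x = Real.sqrt (x ⬝ᵥ x) := by
  rw [vnorm]
  congr 1
  simp [dotProduct, sq]

lemma dot_self_nonneg (x : Fin n → ℝ) : 0 ≤ x ⬝ᵥ x :=
  Finset.sum_nonneg fun j _ => mul_self_nonneg _

lemma sqrt_add_le (a b : ℝ) (ha : 0 ≤ a) (hb : 0 ≤ b) :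
    Real.sqrt (a + b) ≤ Real.sqrt a + Real.sqrt b := by
  have h1 : a + b ≤ (Real.sqrt a + Real.sqrt b) ^ 2 := by
    have := Real.sq_sqrt ha
    have := Real.sq_sqrt hb
    nlinarith [Real.sqrt_nonneg a, Real.sqrt_nonneg b]
  calc Real.sqrt (a + b) ≤ Real.sqrt ((Real.sqrt a + Real.sqrt b) ^ 2) := Real.sqrt_le_sqrt h1
    _ = Real.sqrt a + Real.sqrt b := Real.sqrt_sq (by positivity)

end Defl

open Defl in
set_option maxHeartbeats 2000000 in
/-- **Correctness of singular value estimation via repeated deflation.** If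
`A⁽¹⁾ = A`, `A⁽ⁱ⁺¹⁾ = A⁽ⁱ⁾ − zᵢzᵢᵀA`, each `zᵢ` is a unit vector in the column space
of `A⁽ⁱ⁾` with `‖(A⁽ⁱ⁾)ᵀzᵢ‖₂ ≥ (1−ε)σ₁(A⁽ⁱ⁾)`, then the `zᵢ` are pairwise orthogonal
and `(1−ε)σᵢ(A) ≤ ‖Aᵀzᵢ‖₂ ≤ σᵢ(A) + σ₁(A)√(2iε)` for all `i ≤ k`. -/
theorem deflation_all_singular_values
    (n k : ℕ) (A : Matrix (Fin n) (Fin n) ℝ) (ε : ℝ) (hε : ε ∈ Set.Ioo (0 : ℝ) 1)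
    (hk : k ≤ n) (z : ℕ → Fin n → ℝ) (B : ℕ → Matrix (Fin n) (Fin n) ℝ)
    (hB1 : B 1 = A)
    (hBrec : ∀ i, 1 ≤ i → i ≤ k → B (i + 1) = B i - Matrix.vecMulVec (z i) (z i) * A)
    (hunit : ∀ i, 1 ≤ i → i ≤ k → vnorm (z i) = 1)
    (hcol : ∀ i, 1 ≤ i → i ≤ k → ∃ w : Fin n → ℝ, (B i) *ᵥ w = z i)
    (happrox : ∀ i, 1 ≤ i → i ≤ k →
      (1 - ε) * sval (B i) 1 ≤ vnorm ((B i)ᵀ *ᵥ z i)) :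
    (∀ i j, 1 ≤ i → i ≤ k → 1 ≤ j → j ≤ k → i ≠ j → z i ⬝ᵥ z j = 0) ∧
    (∀ i, 1 ≤ i → i ≤ k →
      (1 - ε) * sval A i ≤ vnorm (Aᵀ *ᵥ z i) ∧
      vnorm (Aᵀ *ᵥ z i) ≤ sval A i + sval A 1 * Real.sqrt (2 * i * ε)) := by
  classical
  obtain ⟨hε0, hε1⟩ := hε
  -- unit vectors as dot products
  have hzz : ∀ i, 1 ≤ i → i ≤ k → z i ⬝ᵥ z i = 1 := by
    intro i h1 h2
    have h := hunit i h1 h2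
    rw [vnorm] at h
    have hsum := Real.sqrt_eq_one.mp h
    rw [← hsum]
    simp [dotProduct, sq]
  -- inner induction helper
  have inner : ∀ L, 1 ≤ L → L ≤ k → (∀ m', 1 ≤ m' → m' < L → z m' ᵥ* B L = 0) →
      ∀ m, 1 ≤ m → m ≤ L → z L ᵥ* B m = z L ᵥ* A := by
    intro L hL1 hLk hfirst m
    induction m with
    | zero => intro h; omega
    | succ m ihm =>
      intro _ hmL
      rcases Nat.eq_zero_or_pos m with hm0 | hm1
      · subst hm0; rw [hB1]
      · have hmk : m ≤ k := by omega
        rw [hBrec m hm1 hmk, Matrix.vecMul_sub]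
        have hzjV : z L ᵥ* (Matrix.vecMulVec (z m) (z m) * A)
            = (z L ⬝ᵥ z m) • (z m ᵥ* A) := by
          rw [← Matrix.vecMul_vecMul, Defl.vecMul_vecMulVec, Matrix.smul_vecMul]
        obtain ⟨v, hv⟩ := hcol L hL1 hLk
        have hdot : z L ⬝ᵥ z m = 0 := by
          rw [dotProduct_comm]
          rw [← hv, Matrix.dotProduct_mulVec, hfirst m hm1 (by omega), zero_dotProduct]
        rw [hzjV, hdot, zero_smul, sub_zero]
        exact ihm hm1 (by omega)
  -- key orthogonality fact
  have key : ∀ l, 1 ≤ l → l ≤ k + 1 → ∀ j, 1 ≤ j → j < l → z j ᵥ* B l = 0 := by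
    intro l
    induction l with
    | zero => intro h _ j _ hj; omega
    | succ l ihl =>
      intro _ hlk1 j hj1 hjl1
      have hl1 : 1 ≤ l := by omega
      have hlk : l ≤ k := by omega
      have hfirst : ∀ m', 1 ≤ m' → m' < l → z m' ᵥ* B l = 0 :=
        fun m' a b => ihl hl1 (by omega) m' a b
      rw [hBrec l hl1 hlk, Matrix.vecMul_sub]
      have hzjV : z j ᵥ* (Matrix.vecMulVec (z l) (z l) * A)
          = (z j ⬝ᵥ z l) • (z l ᵥ* A) := by
        rw [← Matrix.vecMul_vecMul, Defl.vecMul_vecMulVec, Matrix.smul_vecMul]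
      rcases Nat.lt_or_ge j l with hjl | hjl
      · obtain ⟨v, hv⟩ := hcol l hl1 hlk
        have hdot : z j ⬝ᵥ z l = 0 := by
          rw [← hv, Matrix.dotProduct_mulVec, hfirst j hj1 hjl, zero_dotProduct]
        rw [hzjV, hdot, zero_smul, sub_zero, hfirst j hj1 hjl]
      · have hjeq : j = l := by omega
        subst hjeq
        have hsecond : z j ᵥ* B j = z j ᵥ* A := inner j hj1 hlk hfirst j hj1 (le_refl j)
        rw [hzjV, hzz j hj1 hlk, one_smul, hsecond, sub_self]
  -- orthogonality of z's
  have orth : ∀ i j, 1 ≤ i → i ≤ k → 1 ≤ j → j ≤ k → i ≠ j → z i ⬝ᵥ z j = 0 := by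
    have base : ∀ i j, 1 ≤ i → j ≤ k → i < j → z i ⬝ᵥ z j = 0 := by
      intro i j hi1 hjk hij
      obtain ⟨v, hv⟩ := hcol j (by omega) hjk
      rw [← hv, Matrix.dotProduct_mulVec, key j (by omega) (by omega) i hi1 hij,
        zero_dotProduct]
    intro i j hi1 hik hj1 hjk hij
    rcases Nat.lt_or_ge i j with h | h
    · exact base i j hi1 hjk h
    · have : j < i := by omega
      rw [dotProduct_comm]
      exact base j i hj1 hik this
  have keyA : ∀ m, 1 ≤ m → m ≤ k → z m ᵥ* B m = z m ᵥ* A := by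
    intro m h1 h2
    exact inner m h1 h2 (fun m' a b => key m h1 (by omega) m' a b) m h1 (le_refl m)
  refine ⟨orth, ?_⟩
  intro i hi1 hik
  have hin : i ≤ n := le_trans hik hk
  have hn1 : 1 ≤ n := by omega
  -- set up the Gram chain
  set M : ℕ → Matrix (Fin n) (Fin n) ℝ := fun m => (B m)ᴴ * B m with hMdef
  have hM : ∀ m, (M m).IsHermitian := fun m => Matrix.isHermitian_conjTranspose_mul_self (B m)
  set u : ℕ → Fin n → ℝ := fun m =>
    if h : 1 ≤ m ∧ m ≤ k then Classical.choose (hcol m h.1 h.2) else 0 with hudef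
  have hBu : ∀ m, 1 ≤ m → m ≤ k → B m *ᵥ u m = z m := by
    intro m h1 h2
    rw [hudef]
    simp only [dif_pos (And.intro h1 h2)]
    exact Classical.choose_spec (hcol m h1 h2)
  have hconjT : ∀ m, (B m)ᴴ = (B m)ᵀ := fun m =>
    Matrix.conjTranspose_eq_transpose_of_trivial (B m)
  have hwkey : ∀ m, 1 ≤ m → m ≤ k → M m *ᵥ u m = z m ᵥ* B m := by
    intro m h1 h2
    rw [hMdef]
    simp only []
    rw [← Matrix.mulVec_mulVec, hBu m h1 h2, hconjT m, Matrix.mulVec_transpose]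
  have hucond : ∀ m, 1 ≤ m → m ≤ k → u m ⬝ᵥ (M m *ᵥ u m) = 1 := by
    intro m h1 h2
    rw [hwkey m h1 h2, ← Matrix.mulVec_transpose, Matrix.dotProduct_mulVec,
      Matrix.vecMul_transpose, hBu m h1 h2]
    exact hzz m h1 h2
  have hrecM : ∀ m, 1 ≤ m → m < i →
      M (m+1) = M m - Matrix.vecMulVec (M m *ᵥ u m) (M m *ᵥ u m) := by
    intro m h1 h2
    have hmk : m ≤ k := by omega
    have hBstep : B (m+1) = B m - Matrix.vecMulVec (z m) (z m ᵥ* B m) := by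
      rw [hBrec m h1 hmk, Defl.vecMulVec_mul, keyA m h1 hmk]
    rw [hwkey m h1 hmk, hMdef]
    simp only []
    rw [hBstep]
    exact deflate_matrix (B m) (z m) (z m ᵥ* B m) (hzz m h1 hmk) rfl
  have hpsdall : ∀ m, ∀ j, 0 ≤ (hM m).eigenvalues j := fun m =>
    (Matrix.posSemidef_conjTranspose_mul_self (B m)).eigenvalues_nonneg
  -- error bound per step
  set ε2 : ℝ := 2 * ε - ε ^ 2 with hε2def
  have hε2pos : 0 ≤ ε2 := by nlinarith
  have hEb : ∀ m, 1 ≤ m → m ≤ k →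
      lam (hM m) 1 - (M m *ᵥ u m) ⬝ᵥ (M m *ᵥ u m) ≤ ε2 * lam (hM m) 1 := by
    intro m h1 h2
    have hL0 : 0 ≤ lam (hM m) 1 := lam_nonneg (hM m) (hpsdall m) 1
    have happ := happrox m h1 h2
    have hBT : (B m)ᵀ *ᵥ z m = M m *ᵥ u m := by
      rw [hwkey m h1 h2, Matrix.mulVec_transpose]
    rw [hBT, sval_eq (B m) 1] at happ
    have hsval : lam (Matrix.isHermitian_conjTranspose_mul_self (B m)) 1 = lam (hM m) 1 := rfl
    rw [hsval, vnorm_eq_sqrt_dot] at happ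
    set W := (M m *ᵥ u m) ⬝ᵥ (M m *ᵥ u m) with hWdef
    have hW0 : 0 ≤ W := dot_self_nonneg _
    have hsq : (1 - ε) ^ 2 * lam (hM m) 1 ≤ W := by
      have ha : 0 ≤ (1 - ε) * Real.sqrt (lam (hM m) 1) :=
        mul_nonneg (by linarith) (Real.sqrt_nonneg _)
      have h3 := pow_le_pow_left₀ ha happ 2
      rw [mul_pow, Real.sq_sqrt hL0, Real.sq_sqrt hW0] at h3
      exact h3
    nlinarith
  -- apply the chain
  obtain ⟨hpsdMi, hmono, hlow, hup⟩ := chain M hM u i hi1 hin hrecM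
    (fun m a b => hucond m a (by omega)) (hpsdall 1) ε2 hε2pos
    (fun m a b => hEb m a (by omega))
  -- identification of lam (hM 1) with the singular values of A
  have hM1A : M 1 = Aᴴ * A := by rw [hMdef]; simp only []; rw [hB1]
  have hlamA : ∀ t, lam (hM 1) t = lam (Matrix.isHermitian_conjTranspose_mul_self A) t :=
    fun t => lam_congr hM1A (hM 1) (Matrix.isHermitian_conjTranspose_mul_self A) t
  have hsvalA : ∀ t, sval A t = Real.sqrt (lam (hM 1) t) := by
    intro t
    rw [sval_eq A t, hlamA t]
  -- the vector Aᵀ z i equals M i *ᵥ u i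
  have hAz : Aᵀ *ᵥ z i = M i *ᵥ u i := by
    rw [hwkey i hi1 hik, keyA i hi1 hik, Matrix.mulVec_transpose]
  have hvn : vnorm (Aᵀ *ᵥ z i) = Real.sqrt ((M i *ᵥ u i) ⬝ᵥ (M i *ᵥ u i)) := by
    rw [hAz, vnorm_eq_sqrt_dot]
  set W := (M i *ᵥ u i) ⬝ᵥ (M i *ᵥ u i) with hWdef
  have hW0 : 0 ≤ W := dot_self_nonneg _
  have hLi0 : 0 ≤ lam (hM 1) i := lam_nonneg (hM 1) (hpsdall 1) i
  have hL10 : 0 ≤ lam (hM 1) 1 := lam_nonneg (hM 1) (hpsdall 1) 1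
  have hρ0 : 0 ≤ lam (hM i) 1 := lam_nonneg (hM i) (hpsdMi) 1
  constructor
  · -- lower bound
    have happ := happrox i hi1 hik
    have hBT : (B i)ᵀ *ᵥ z i = M i *ᵥ u i := by
      rw [hwkey i hi1 hik, Matrix.mulVec_transpose]
    rw [hBT, sval_eq (B i) 1, vnorm_eq_sqrt_dot] at happ
    have hsval : lam (Matrix.isHermitian_conjTranspose_mul_self (B i)) 1 = lam (hM i) 1 := rfl
    rw [hsval] at happ
    rw [hvn, hsvalA i]
    calc (1 - ε) * Real.sqrt (lam (hM 1) i)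
        ≤ (1 - ε) * Real.sqrt (lam (hM i) 1) := by
          have := Real.sqrt_le_sqrt hlow
          nlinarith [this]
      _ ≤ Real.sqrt W := happ
  · -- upper bound
    have hWle : W ≤ lam (hM i) 1 := by
      rw [hWdef]
      exact ww_le (hM i) hpsdMi (u i) (hucond i hi1 hik) hn1
    have h1 : Real.sqrt W ≤ Real.sqrt (lam (hM i) 1) := Real.sqrt_le_sqrt hWle
    have h2 : Real.sqrt (lam (hM i) 1)
        ≤ Real.sqrt (lam (hM 1) i + ((i - 1 : ℕ) : ℝ) * (ε2 * lam (hM 1) 1)) :=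
      Real.sqrt_le_sqrt hup
    have herr0 : 0 ≤ ((i - 1 : ℕ) : ℝ) * (ε2 * lam (hM 1) 1) := by positivity
    have h3 : Real.sqrt (lam (hM 1) i + ((i - 1 : ℕ) : ℝ) * (ε2 * lam (hM 1) 1))
        ≤ Real.sqrt (lam (hM 1) i) + Real.sqrt (((i - 1 : ℕ) : ℝ) * (ε2 * lam (hM 1) 1)) :=
      sqrt_add_le _ _ hLi0 herr0
    have h4 : Real.sqrt (((i - 1 : ℕ) : ℝ) * (ε2 * lam (hM 1) 1))
        ≤ Real.sqrt ((2 * i * ε) * lam (hM 1) 1) := by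
      refine Real.sqrt_le_sqrt ?_
      have hcast : ((i - 1 : ℕ) : ℝ) ≤ (i : ℝ) := by
        have : (i - 1 : ℕ) ≤ i := Nat.sub_le i 1
        exact_mod_cast this
      have hl : ((i - 1 : ℕ) : ℝ) * ε2 ≤ 2 * i * ε := by
        have hi1' : (1 : ℝ) ≤ (i : ℝ) := by exact_mod_cast hi1
        have h0 : (0:ℝ) ≤ ((i - 1 : ℕ) : ℝ) := by positivity
        nlinarith
      nlinarith
    have h5 : Real.sqrt ((2 * i * ε) * lam (hM 1) 1)
        = Real.sqrt (lam (hM 1) 1) * Real.sqrt (2 * i * ε) := by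
      rw [Real.sqrt_mul (by positivity), mul_comm]
    rw [hvn, hsvalA i, hsvalA 1]
    calc Real.sqrt W ≤ Real.sqrt (lam (hM 1) i)
          + Real.sqrt (((i - 1 : ℕ) : ℝ) * (ε2 * lam (hM 1) 1)) := by linarith
      _ ≤ Real.sqrt (lam (hM 1) i) + Real.sqrt (lam (hM 1) 1) * Real.sqrt (2 * i * ε) := by
          rw [← h5]; linarith
end

section
/- For every n, every ε ∈ (0,1), and every set Q ⊆ [n]×[n] with |Q| ≤ n/ε, there exist positive semidefinite matrices A₀, A₁ ∈ {0,1}^{n×n} such that (A₀)_{ij} = (A₁)_{ij} for every (i,j) ∈ Q and for every i = j, yet λ_max(A₁) − λ_max(A₀) ≥ εn/4 − 1. (Consequently, any deterministic, possibly adaptive, algorithm that approximates all eigenvalues of a binary PSD matrix to additive error εn/8 must read Ω(n/ε) entries.) -/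
open Matrix BigOperators Finset


open Finset

variable {α : Type*} [DecidableEq α]

lemma card_filter_prod (R : α → α → Prop) [DecidableRel R] (W V : Finset α) :
    ((W ×ˢ V).filter fun p => R p.1 p.2).card = ∑ a ∈ W, (V.filter fun b => R a b).card := by
  rw [Finset.card_eq_sum_card_fiberwise (f := Prod.fst) (t := W)
    (fun p hp => (Finset.mem_product.1 (Finset.mem_filter.1 hp).1).1)]
  refine Finset.sum_congr rfl fun a ha => ?_
  have : (((W ×ˢ V).filter fun p => R p.1 p.2).filter fun p => p.1 = a)
      = (V.filter fun b => R a b).image (fun b => (a, b)) := by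
    ext p
    simp only [Finset.mem_filter, Finset.mem_product, Finset.mem_image]
    constructor
    · rintro ⟨⟨⟨h1, h2⟩, h3⟩, rfl⟩
      exact ⟨p.2, ⟨h2, h3⟩, rfl⟩
    · rintro ⟨b, ⟨hb, hR⟩, rfl⟩
      exact ⟨⟨⟨ha, hb⟩, hR⟩, rfl⟩
  rw [this, Finset.card_image_of_injective _ (fun b c h => (Prod.mk.injEq _ _ _ _ ▸ h).2)]

lemma turan_step (n k s e e' : ℤ) (hk1 : 1 ≤ k) (hkn : k ≤ n) (hs : 0 ≤ s)
    (hb : (n - k)^2 ≤ s * ((n - k) + e'))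
    (hrem : e' + k * (k - 1) ≤ e) (hT : n * k ≤ n + e) :
    n^2 ≤ (s + 1) * (n + e) := by
  have hT' : (n - k)^2 ≤ s * ((n + e) - k^2) := by nlinarith
  rcases lt_or_ge (k^2) (n + e) with hc | hc
  · nlinarith [sq_nonneg ((n + e) - n * k), mul_pos (sub_pos.2 hc) (sub_pos.2 hc)]
  · have hnk : n ≤ k := by nlinarith
    have hnk' : n = k := le_antisymm hnk hkn
    nlinarith

/-- Turán-type bound: any graph has an independent set `S` with
`|V|² ≤ |S| * (|V| + ∑ degrees)`. -/
lemma turan_indep (R : α → α → Prop) [DecidableRel R]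
    (hsym : ∀ a b, R a b → R b a) (hirr : ∀ a, ¬ R a a) (V : Finset α) :
    ∃ S ⊆ V, (∀ a ∈ S, ∀ b ∈ S, ¬ R a b) ∧
      V.card ^ 2 ≤ S.card * (V.card + ((V ×ˢ V).filter fun p => R p.1 p.2).card) := by
  obtain ⟨m, hm⟩ : ∃ m, V.card = m := ⟨_, rfl⟩
  induction m using Nat.strong_induction_on generalizing V with
  | _ m IH =>
  subst hm
  rcases V.eq_empty_or_nonempty with rfl | hV
  · exact ⟨∅, Finset.Subset.refl _, by simp⟩
  obtain ⟨v, hvV, hmin⟩ := Finset.exists_min_image V (fun a => (V.filter fun b => R a b).card) hV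
  set d := (V.filter fun b => R v b).card with hd
  set N : Finset α := insert v (V.filter fun b => R v b) with hN
  have hvnot : v ∉ V.filter fun b => R v b := fun h => hirr v (Finset.mem_filter.1 h).2
  have hNcard : N.card = d + 1 := by rw [hN, Finset.card_insert_of_notMem hvnot]
  have hNsub : N ⊆ V := by
    rw [hN]; exact Finset.insert_subset hvV (Finset.filter_subset _ _)
  set V' := V \ N with hV'
  have hV'card : V'.card = V.card - (d + 1) := by
    rw [hV', Finset.card_sdiff_of_subset hNsub, hNcard]
  have hV'lt : V'.card < V.card := by
    have := Finset.card_le_card hNsub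
    rw [hV'card]; omega
  obtain ⟨S', hS'sub, hS'ind, hS'bound⟩ := IH V'.card hV'lt V' rfl
  -- edge counts
  set e := ((V ×ˢ V).filter fun p => R p.1 p.2).card with he
  set e' := ((V' ×ˢ V').filter fun p => R p.1 p.2).card with he'
  -- min-degree facts
  have hdle : ∀ a ∈ V, d ≤ (V.filter fun b => R a b).card := hmin
  have hnd : V.card * d ≤ e := by
    rw [he, card_filter_prod]
    calc V.card * d = ∑ _a ∈ V, d := by rw [Finset.sum_const, smul_eq_mul, mul_comm]
    _ ≤ _ := Finset.sum_le_sum hdle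
  -- edges removed
  have hrem : e' + (d + 1) * d ≤ e := by
    have h1 : ((N ×ˢ V).filter fun p => R p.1 p.2).card ≥ (d+1) * d := by
      rw [card_filter_prod]
      calc (d+1)*d = ∑ _a ∈ N, d := by rw [Finset.sum_const, smul_eq_mul, hNcard, mul_comm]
      _ ≤ _ := Finset.sum_le_sum fun a ha => hdle a (hNsub ha)
    have h2 : ((N ×ˢ V).filter fun p => R p.1 p.2) ∪ ((V' ×ˢ V').filter fun p => R p.1 p.2)
        ⊆ (V ×ˢ V).filter fun p => R p.1 p.2 := by
      intro p hp
      rcases Finset.mem_union.1 hp with h | h <;>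
        simp only [Finset.mem_filter, Finset.mem_product] at h ⊢
      · exact ⟨⟨hNsub h.1.1, h.1.2⟩, h.2⟩
      · exact ⟨⟨(Finset.mem_sdiff.1 h.1.1).1, (Finset.mem_sdiff.1 h.1.2).1⟩, h.2⟩
    have h3 : Disjoint ((N ×ˢ V).filter fun p => R p.1 p.2)
        ((V' ×ˢ V').filter fun p => R p.1 p.2) := by
      refine Finset.disjoint_left.2 fun p hp hp' => ?_
      simp only [Finset.mem_filter, Finset.mem_product] at hp hp'
      exact (Finset.mem_sdiff.1 hp'.1.1).2 hp.1.1
    have := Finset.card_le_card h2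
    rw [Finset.card_union_of_disjoint h3] at this
    omega
  -- independence of insert v S'
  have hvS' : v ∉ S' := fun h => by
    have := Finset.mem_sdiff.1 (hS'sub h)
    exact this.2 (Finset.mem_insert_self v _)
  refine ⟨insert v S', Finset.insert_subset hvV (hS'sub.trans (Finset.sdiff_subset)), ?_, ?_⟩
  · intro a ha b hb hR
    rcases Finset.mem_insert.1 ha with rfl | ha'
    · rcases Finset.mem_insert.1 hb with rfl | hb'
      · exact hirr _ hR
      · exact (Finset.mem_sdiff.1 (hS'sub hb')).2 (Finset.mem_insert_of_mem
          (Finset.mem_filter.2 ⟨(Finset.mem_sdiff.1 (hS'sub hb')).1, hR⟩))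
    · rcases Finset.mem_insert.1 hb with rfl | hb'
      · exact (Finset.mem_sdiff.1 (hS'sub ha')).2 (Finset.mem_insert_of_mem
          (Finset.mem_filter.2 ⟨(Finset.mem_sdiff.1 (hS'sub ha')).1, hsym _ _ hR⟩))
      · exact hS'ind a ha' b hb' hR
  · -- arithmetic
    rw [Finset.card_insert_of_notMem hvS']
    have hkn : d + 1 <= V.card := by
      have := Finset.card_le_card hNsub; omega
    have hcast : ((V'.card : Nat) : Int) = (V.card : Int) - (d + 1) := by
      rw [hV'card, Int.natCast_sub hkn]; push_cast; ring
    have hb : ((V.card:Int) - (d+1))^2 <= (S'.card:Int) * (((V.card:Int) - (d+1)) + e') := by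
      rw [<- hcast]; exact_mod_cast hS'bound
    have hZ := turan_step (V.card:Int) ((d:Int)+1) (S'.card:Int) (e:Int) (e':Int)
      (by have := Int.natCast_nonneg d; omega) (by exact_mod_cast hkn) (Int.natCast_nonneg _) hb
      (by push_cast; have : (e':Int) + ((d:Int)+1) * d <= e := by exact_mod_cast hrem
          nlinarith)
      (by have : (V.card:Int) * d <= e := by exact_mod_cast hnd
          push_cast; nlinarith)
    exact_mod_cast hZ



lemma svRaw_le_sval_one {m : ℕ} (hm : 1 ≤ m) (A : Matrix (Fin m) (Fin m) ℝ) (j : Fin m) :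
    svRaw A j ≤ sval A 1 := by
  rw [sval, dif_pos ⟨le_refl 1, hm⟩]
  have h1 : svRaw A j = (svRaw A ∘ Tuple.sort (svRaw A)) ((Tuple.sort (svRaw A))⁻¹ j) := by
    simp
  rw [h1]
  exact Tuple.monotone_sort (svRaw A) (by
    rw [Fin.le_def]
    simp only []
    omega)

lemma eigenvalue_of_mulVec {m : ℕ} {B : Matrix (Fin m) (Fin m) ℝ} (hB : B.IsHermitian)
    {u : Fin m → ℝ} (hu : u ≠ 0) {μ : ℝ} (h : B *ᵥ u = μ • u) :
    ∃ j, hB.eigenvalues j = μ := by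
  have hmem : μ ∈ spectrum ℝ B := by
    rw [spectrum.mem_iff]
    intro hunit
    apply hu
    obtain ⟨w, hw⟩ := hunit
    have hker : (algebraMap ℝ (Matrix (Fin m) (Fin m) ℝ) μ - B) *ᵥ u = 0 := by
      rw [Matrix.sub_mulVec, h, Algebra.algebraMap_eq_smul_one, Matrix.smul_mulVec,
        Matrix.one_mulVec, sub_self]
    calc u = (1 : Matrix (Fin m) (Fin m) ℝ) *ᵥ u := (Matrix.one_mulVec u).symm
    _ = ((↑w⁻¹ : Matrix (Fin m) (Fin m) ℝ) * (↑w : Matrix (Fin m) (Fin m) ℝ)) *ᵥ u := by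
        rw [w.inv_mul]
    _ = (↑w⁻¹ : Matrix (Fin m) (Fin m) ℝ) *ᵥ ((↑w : Matrix (Fin m) (Fin m) ℝ) *ᵥ u) :=
        (Matrix.mulVec_mulVec u _ _).symm
    _ = 0 := by rw [hw, hker, Matrix.mulVec_zero]
  rw [hB.spectrum_real_eq_range_eigenvalues] at hmem
  exact hmem.imp fun j hj => hj

lemma spectrum_one {m : ℕ} {μ : ℝ} (h : μ ∈ spectrum ℝ (1 : Matrix (Fin m) (Fin m) ℝ)) :
    μ = 1 := by
  by_contra hne
  rw [spectrum.mem_iff] at h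
  apply h
  rw [Algebra.algebraMap_eq_smul_one]
  have heq : (μ • 1 - 1 : Matrix (Fin m) (Fin m) ℝ) = (μ - 1) • 1 := by
    rw [sub_smul, one_smul]
  rw [heq, ← Algebra.algebraMap_eq_smul_one]
  exact (isUnit_iff_ne_zero.2 (sub_ne_zero.2 hne)).map (algebraMap ℝ (Matrix (Fin m) (Fin m) ℝ))

lemma spectrum_one_of_eq {m : ℕ} {M : Matrix (Fin m) (Fin m) ℝ} (hM : M = 1) {μ : ℝ}
    (h : μ ∈ spectrum ℝ M) : μ = 1 := by
  subst hM
  exact spectrum_one h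



open Matrix

variable {m : ℕ}

lemma vecMulVec_self_posSemidef (u : Fin m → ℝ) : (vecMulVec u u).PosSemidef := by
  rw [vecMulVec_eq Unit u u]
  have : replicateCol Unit u = (replicateRow Unit u)ᴴ := by
    rw [conjTranspose_replicateRow]; congr
  rw [this]
  exact posSemidef_conjTranspose_mul_self (replicateRow Unit u)

lemma construction (S : Finset (Fin m)) :
    let u : Fin m → ℝ := fun i => if i ∈ S then 1 else 0
    let A : Matrix (Fin m) (Fin m) ℝ :=
      vecMulVec u u + Matrix.diagonal (fun i => if i ∈ S then 0 else 1)
    A.PosSemidef ∧ (∀ i j, A i j = 0 ∨ A i j = 1) ∧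
      (∀ i j, i ≠ j → ¬(i ∈ S ∧ j ∈ S) → A i j = 0) ∧ (∀ i, A i i = 1) ∧
      A *ᵥ u = (S.card : ℝ) • u := by
  intro u A
  have hu2 : ∀ j, u j * u j = u j := by
    intro j; simp only [u]; split <;> simp
  refine ⟨?_, ?_, ?_, ?_, ?_⟩
  · exact (vecMulVec_self_posSemidef u).add (Matrix.PosSemidef.diagonal (by
      intro i; dsimp only; split <;> norm_num))
  · intro i j
    simp only [A, Matrix.add_apply, vecMulVec_apply, Matrix.diagonal_apply, u]
    by_cases hi : i ∈ S <;> by_cases hj : j ∈ S <;> by_cases hij : i = j <;>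
      simp [hi, hj, hij]
  · intro i j hij hS
    simp only [A, Matrix.add_apply, vecMulVec_apply, Matrix.diagonal_apply, u]
    rw [if_neg hij]
    by_cases hi : i ∈ S <;> by_cases hj : j ∈ S <;> simp [hi, hj] <;> tauto
  · intro i
    simp only [A, Matrix.add_apply, vecMulVec_apply, Matrix.diagonal_apply_eq, u]
    by_cases hi : i ∈ S <;> simp [hi]
  · funext i
    simp only [A, Matrix.add_mulVec, Pi.add_apply]
    have h1 : (vecMulVec u u *ᵥ u) i = u i * (S.card : ℝ) := by
      simp only [Matrix.mulVec, vecMulVec_apply, dotProduct]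
      rw [show ∑ j, u i * u j * u j = u i * ∑ j, u j by
        rw [Finset.mul_sum]; exact Finset.sum_congr rfl fun j _ => by rw [mul_assoc, hu2 j]]
      congr 1
      simp only [u]
      rw [Finset.sum_ite_mem, Finset.univ_inter, Finset.sum_const, nsmul_eq_mul, mul_one]
    have h2 : (Matrix.diagonal (fun i => if i ∈ S then (0:ℝ) else 1) *ᵥ u) i = 0 := by
      rw [Matrix.mulVec_diagonal]
      simp only [u]
      split <;> simp
    rw [h1, h2, add_zero, Pi.smul_apply, smul_eq_mul, mul_comm]

/-- **Query lower bound for deterministic eigenvalue approximation of binary PSD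
matrices.** For any set `Q` of at most `n/ε` queried positions there are two binary PSD
matrices agreeing on `Q` and on the diagonal whose largest eigenvalues differ by at
least `εn/4 − 1`. -/
theorem binary_psd_query_lower_bound
    (n : ℕ) (ε : ℝ) (hε : ε ∈ Set.Ioo (0 : ℝ) 1)
    (Q : Finset (Fin n × Fin n)) (hQ : (Q.card : ℝ) ≤ n / ε) :
    ∃ A₀ A₁ : Matrix (Fin n) (Fin n) ℝ,
      A₀.PosSemidef ∧ A₁.PosSemidef ∧
      (∀ i j, A₀ i j = 0 ∨ A₀ i j = 1) ∧
      (∀ i j, A₁ i j = 0 ∨ A₁ i j = 1) ∧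
      (∀ p ∈ Q, A₀ p.1 p.2 = A₁ p.1 p.2) ∧
      (∀ i, A₀ i i = A₁ i i) ∧
      ε * n / 4 - 1 ≤ sval A₁ 1 - sval A₀ 1 := by
  obtain ⟨hε0, hε1⟩ := hε
  by_cases hcase : ε * n ≤ 4
  · refine ⟨1, 1, Matrix.PosSemidef.one, Matrix.PosSemidef.one, ?_, ?_,
      fun p _ => rfl, fun i => rfl, ?_⟩
    · intro i j; rw [Matrix.one_apply]; split
      · right; rfl
      · left; rfl
    · intro i j; rw [Matrix.one_apply]; split
      · right; rfl
      · left; rfl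
    · rw [sub_self]; linarith
  · push_neg at hcase
    have hn1 : 1 ≤ n := by
      by_contra hn
      have : n = 0 := by omega
      rw [this] at hcase; push_cast at hcase; linarith
    have hnpos : (0:ℝ) < n := by exact_mod_cast hn1
    -- Turán argument
    have hsym : ∀ a b : Fin n, (fun i j => i ≠ j ∧ ((i,j) ∈ Q ∨ (j,i) ∈ Q)) a b →
        (fun i j => i ≠ j ∧ ((i,j) ∈ Q ∨ (j,i) ∈ Q)) b a :=
      fun a b h => ⟨h.1.symm, h.2.symm⟩
    have hirr : ∀ a : Fin n, ¬ (fun i j => i ≠ j ∧ ((i,j) ∈ Q ∨ (j,i) ∈ Q)) a a :=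
      fun a h => h.1 rfl
    obtain ⟨S, -, hSind, hScard⟩ :=
      turan_indep (fun i j => i ≠ j ∧ ((i,j) ∈ Q ∨ (j,i) ∈ Q)) hsym hirr Finset.univ
    -- edge bound
    have hedge : ((Finset.univ ×ˢ Finset.univ).filter
        (fun p : Fin n × Fin n => p.1 ≠ p.2 ∧ ((p.1, p.2) ∈ Q ∨ (p.2, p.1) ∈ Q))).card
        ≤ 2 * Q.card := by
      calc _ ≤ (Q ∪ Q.image Prod.swap).card := by
            apply Finset.card_le_card
            intro p hp
            have h := (Finset.mem_filter.1 hp).2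
            rcases h.2 with h' | h'
            · exact Finset.mem_union_left _ h'
            · exact Finset.mem_union_right _ (Finset.mem_image.2 ⟨(p.2, p.1), h', rfl⟩)
      _ ≤ Q.card + (Q.image Prod.swap).card := Finset.card_union_le _ _
      _ ≤ Q.card + Q.card := by have := Finset.card_image_le (s := Q) (f := Prod.swap); omega
      _ = 2 * Q.card := by ring
    -- real bound on |S|
    have hcard : ε * n / 4 ≤ (S.card : ℝ) := by
      have hc1 : (n:ℝ)^2 ≤ (S.card:ℝ) * ((n:ℝ) +
          (((Finset.univ ×ˢ Finset.univ).filter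
          (fun p : Fin n × Fin n => p.1 ≠ p.2 ∧ ((p.1, p.2) ∈ Q ∨ (p.2, p.1) ∈ Q))).card : ℝ)) := by
        simp only [Finset.card_univ, Fintype.card_fin] at hScard
        exact_mod_cast hScard
      set eR : ℝ := (((Finset.univ ×ˢ Finset.univ).filter
          (fun p : Fin n × Fin n => p.1 ≠ p.2 ∧ ((p.1, p.2) ∈ Q ∨ (p.2, p.1) ∈ Q))).card : ℝ)
      have he2 : eR ≤ 2 * ((n:ℝ) / ε) := by
        calc eR ≤ 2 * (Q.card : ℝ) := by
              have : eR = ((((Finset.univ ×ˢ Finset.univ).filter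
                (fun p : Fin n × Fin n => p.1 ≠ p.2 ∧ ((p.1, p.2) ∈ Q ∨ (p.2, p.1) ∈ Q))).card : ℕ) : ℝ) := rfl
              rw [this]; exact_mod_cast hedge
        _ ≤ 2 * ((n:ℝ) / ε) := by linarith
      have hs0 : (0:ℝ) ≤ (S.card : ℝ) := Nat.cast_nonneg _
      have key : ε * (n:ℝ)^2 ≤ (S.card:ℝ) * (n:ℝ) * (ε + 2) := by
        have h3 : ε * eR ≤ 2 * (n:ℝ) := by
          calc ε * eR ≤ ε * (2 * ((n:ℝ)/ε)) := by
                exact mul_le_mul_of_nonneg_left he2 (le_of_lt hε0)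
          _ = 2 * ((n:ℝ) * (ε / ε)) := by ring
          _ = 2 * (n:ℝ) := by rw [div_self (ne_of_gt hε0), mul_one]
        nlinarith [mul_le_mul_of_nonneg_left hc1 (le_of_lt hε0)]
      have h4 : ε + 2 ≤ 4 := by linarith
      have key2 : (n:ℝ) * (ε * (n:ℝ)) ≤ (n:ℝ) * (4 * (S.card:ℝ)) := by
        nlinarith [key, mul_nonneg (by linarith : (0:ℝ) ≤ 2 - ε) (mul_nonneg hs0 hnpos.le)]
      have key3 := (mul_le_mul_iff_right₀ hnpos).1 key2
      linarith
    have hS1 : (1:ℝ) ≤ (S.card : ℝ) := by nlinarith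
    have hSne : ∃ i, i ∈ S := by
      rcases S.eq_empty_or_nonempty with rfl | h
      · simp at hS1; linarith
      · exact h.exists_mem
    -- construction
    obtain ⟨hPSD, hbin, hoff, hdiag, hvec⟩ := construction S
    set u : Fin n → ℝ := fun i => if i ∈ S then 1 else 0 with hu
    set A : Matrix (Fin n) (Fin n) ℝ :=
      vecMulVec u u + Matrix.diagonal (fun i => if i ∈ S then 0 else 1) with hA
    have hAsymm : Aᵀ = A := by
      have h := hPSD.isHermitian
      rwa [Matrix.IsHermitian, Matrix.conjTranspose_eq_transpose_of_trivial] at h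
    have hune : u ≠ 0 := by
      obtain ⟨i, hi⟩ := hSne
      intro h
      have : u i = 0 := congrFun h i
      rw [hu] at this; simp [hi] at this
    -- eigenvector of AᵀA
    have hBvec : (Aᵀ * A) *ᵥ u = ((S.card:ℝ)^2) • u := by
      rw [← Matrix.mulVec_mulVec, hvec, Matrix.mulVec_smul, hAsymm, hvec, smul_smul, sq]
    obtain ⟨j, hj⟩ := eigenvalue_of_mulVec (Matrix.isHermitian_iff_isSymm.mpr (Matrix.isSymm_transpose_mul_self A)) hune hBvec
    have hsvA : (S.card : ℝ) ≤ sval A 1 := by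
      have : svRaw A j = (S.card : ℝ) := by
        rw [svRaw, hj, Real.sqrt_sq (Nat.cast_nonneg _)]
      rw [← this]
      exact svRaw_le_sval_one hn1 A j
    -- sval of identity
    have hsvI : sval (1 : Matrix (Fin n) (Fin n) ℝ) 1 = 1 := by
      have hall : ∀ j, svRaw (1 : Matrix (Fin n) (Fin n) ℝ) j = 1 := by
        intro j
        have hmem := (Matrix.isHermitian_iff_isSymm.mpr (Matrix.isSymm_transpose_mul_self
          (1 : Matrix (Fin n) (Fin n) ℝ))).eigenvalues_mem_spectrum_real j
        have heig := spectrum_one_of_eq (by rw [Matrix.transpose_one, Matrix.one_mul]) hmem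
        rw [svRaw, heig, Real.sqrt_one]
      rw [sval, dif_pos ⟨le_refl 1, hn1⟩]
      exact hall _
    refine ⟨1, A, Matrix.PosSemidef.one, hPSD, ?_, ?_, ?_, ?_, ?_⟩
    · intro i j; rw [Matrix.one_apply]; split
      · right; rfl
      · left; rfl
    · exact hbin
    · intro p hp
      by_cases hij : p.1 = p.2
      · rw [← hij, Matrix.one_apply_eq]
        exact (hdiag p.1).symm
      · rw [Matrix.one_apply_ne hij, hoff p.1 p.2 hij]
        intro ⟨h1, h2⟩
        exact hSind p.1 (Finset.mem_coe.1 h1) p.2 h2 ⟨hij, Or.inl (by rwa [Prod.mk.eta])⟩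
    · intro i
      rw [Matrix.one_apply_eq, hdiag]
    · rw [hsvI]
      linarith
end
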